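/- arXiv:2112.13164 — 6 statements merged into one kernel-verified Lean document; each statement's English description precedes it below -/
import Mathlib

section
/- Let n, L ≥ 1 and b : Fin n → Fin L, with pinching map P_b. (i) If X ∈ M_n(ℂ) is positive semidefinite, then (1/L)·‖X‖_op ≤ ‖P_b(X)‖_op. (ii) For every X ∈ M_n(ℂ), (1/√L)·‖X‖_op ≤ √‖P_b(XᴴX)‖_op; that is, the operator norm is bounded by √L times the Frobenius–Rieffel norm associated to the block-diagonal subalgebra determined by b. -/
open Matrix
open scoped Matrix.Norms.L2Operator ComplexOrder

private lemma pinching_sum_ite_mul_ite {L : ℕ} (p q : Fin L) (x y c : ℂ) :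
    ∑ l, (if p = l then x else 0) * (c * (if q = l then y else 0)) =
      if p = q then x * (c * y) else 0 := by
  rcases eq_or_ne p q with rfl | h
  · simp [mul_ite, ite_mul, Finset.sum_ite_eq]
  · simp [mul_ite, ite_mul, Finset.sum_ite_eq, h]

private lemma pinching_key (n L : ℕ) (b : Fin n → Fin L)
    (B : Matrix (Fin n) (Fin n) ℂ) :
    ‖B‖ * ‖B‖ ≤ (L : ℝ) *
      ‖(Matrix.of fun j k => if b j = b k then (Bᴴ * B) j k else 0 :
          Matrix (Fin n) (Fin n) ℂ)‖ := by
  classical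
  set PX : Matrix (Fin n) (Fin n) ℂ :=
    Matrix.of fun j k => if b j = b k then (Bᴴ * B) j k else 0 with hPX
  set c : ℝ := (L : ℝ) * ‖PX‖ with hc
  have hc0 : 0 ≤ c := by positivity
  -- the squared euclidean norm of a vector as a dot product
  set ν : (Fin n → ℂ) → ℝ := fun u => ‖(WithLp.equiv 2 (Fin n → ℂ)).symm u‖ with hν
  have hν0 : ∀ u, 0 ≤ ν u := fun u => norm_nonneg _
  have hνsq : ∀ u : Fin n → ℂ, ν u ^ 2 = Complex.re (star u ⬝ᵥ u) := by
    intro u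
    rw [hν]
    rw [dotProduct_comm, ← EuclideanSpace.inner_toLp_toLp (𝕜 := ℂ)]
    exact ((inner_self_eq_norm_sq (𝕜 := ℂ) _)).symm
  have hdot : ∀ u : Fin n → ℂ,
      star (B *ᵥ u) ⬝ᵥ (B *ᵥ u) = star u ⬝ᵥ ((Bᴴ * B) *ᵥ u) := by
    intro u
    simp [dotProduct_mulVec, star_mulVec, vecMul_vecMul]
  have hq : ∀ u : Fin n → ℂ,
      ν (B *ᵥ u) ^ 2 = Complex.re (star u ⬝ᵥ ((Bᴴ * B) *ᵥ u)) := by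
    intro u
    rw [hνsq, hdot]
  -- the main pointwise bound
  have main : ∀ w : Fin n → ℂ, ν (B *ᵥ w) ≤ Real.sqrt c * ν w := by
    intro w
    set wl : Fin L → Fin n → ℂ := fun l j => if b j = l then w j else 0 with hwl
    have hsum : ∑ l, wl l = w := by
      funext j
      simp [hwl, Finset.sum_ite_eq]
    have hmv : B *ᵥ w = ∑ l, B *ᵥ wl l := by
      have : B *ᵥ w = B.mulVecLin (∑ l, wl l) := by rw [hsum]; rfl
      rw [this, map_sum]
      rfl
    have hsub : ν (B *ᵥ w) ≤ ∑ l, ν (B *ᵥ wl l) := by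
      rw [hmv]
      have : (WithLp.equiv 2 (Fin n → ℂ)).symm (∑ l, B *ᵥ wl l)
          = ∑ l, (WithLp.equiv 2 (Fin n → ℂ)).symm (B *ᵥ wl l) := WithLp.toLp_sum ..
      rw [hν]
      simp only [this]
      exact norm_sum_le _ _
    -- Cauchy–Schwarz on the finite sum
    have hCS : (∑ l, ν (B *ᵥ wl l)) ^ 2 ≤ (L : ℝ) * ∑ l, ν (B *ᵥ wl l) ^ 2 := by
      have := sq_sum_le_card_mul_sum_sq (s := (Finset.univ : Finset (Fin L)))
        (f := fun l => ν (B *ᵥ wl l))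
      simpa using this
    -- sum of block quadratic forms equals the pinched quadratic form
    have hswap : ∑ l, star (wl l) ⬝ᵥ ((Bᴴ * B) *ᵥ wl l) = star w ⬝ᵥ (PX *ᵥ w) := by
      simp only [dotProduct, mulVec, Finset.mul_sum]
      rw [Finset.sum_comm]
      refine Finset.sum_congr rfl fun j _ => ?_
      rw [Finset.sum_comm]
      refine Finset.sum_congr rfl fun k _ => ?_
      simp only [hwl, Pi.star_apply, apply_ite (star : ℂ → ℂ), star_zero, hPX,
        Matrix.of_apply]
      rw [pinching_sum_ite_mul_ite (b j) (b k) (star (w j)) (w k) ((Bᴴ * B) j k)]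
      split_ifs with h <;> ring
    have hre : ∑ l, ν (B *ᵥ wl l) ^ 2 = Complex.re (star w ⬝ᵥ (PX *ᵥ w)) := by
      rw [← hswap, Complex.re_sum]
      exact Finset.sum_congr rfl fun l _ => hq (wl l)
    -- bound the pinched quadratic form by the norm
    have hbound : Complex.re (star w ⬝ᵥ (PX *ᵥ w)) ≤ ‖PX‖ * ν w ^ 2 := by
      have h1 : star w ⬝ᵥ (PX *ᵥ w)
          = @inner ℂ _ _ ((WithLp.equiv 2 (Fin n → ℂ)).symm w)
              ((WithLp.equiv 2 (Fin n → ℂ)).symm (PX *ᵥ w)) :=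
        by rw [dotProduct_comm]; rfl
      rw [h1]
      calc Complex.re _ ≤ ‖@inner ℂ _ _ ((WithLp.equiv 2 (Fin n → ℂ)).symm w)
              ((WithLp.equiv 2 (Fin n → ℂ)).symm (PX *ᵥ w))‖ := Complex.re_le_norm _
        _ ≤ ‖(WithLp.equiv 2 (Fin n → ℂ)).symm w‖ *
              ‖(WithLp.equiv 2 (Fin n → ℂ)).symm (PX *ᵥ w)‖ := norm_inner_le_norm _ _
        _ ≤ ‖(WithLp.equiv 2 (Fin n → ℂ)).symm w‖ *
              (‖PX‖ * ‖(WithLp.equiv 2 (Fin n → ℂ)).symm w‖) := by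
            gcongr
            exact PX.l2_opNorm_mulVec ((WithLp.equiv 2 (Fin n → ℂ)).symm w)
        _ = ‖PX‖ * ν w ^ 2 := by rw [hν]; ring
    have hfinal : ν (B *ᵥ w) ^ 2 ≤ c * ν w ^ 2 := by
      calc ν (B *ᵥ w) ^ 2 ≤ (∑ l, ν (B *ᵥ wl l)) ^ 2 := by
            apply pow_le_pow_left₀ (hν0 _) hsub
        _ ≤ (L : ℝ) * ∑ l, ν (B *ᵥ wl l) ^ 2 := hCS
        _ = (L : ℝ) * Complex.re (star w ⬝ᵥ (PX *ᵥ w)) := by rw [hre]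
        _ ≤ (L : ℝ) * (‖PX‖ * ν w ^ 2) := by
            apply mul_le_mul_of_nonneg_left hbound (by positivity)
        _ = c * ν w ^ 2 := by rw [hc]; ring
    calc ν (B *ᵥ w) = Real.sqrt (ν (B *ᵥ w) ^ 2) := (Real.sqrt_sq (hν0 _)).symm
      _ ≤ Real.sqrt (c * ν w ^ 2) := Real.sqrt_le_sqrt hfinal
      _ = Real.sqrt c * ν w := by
          rw [Real.sqrt_mul hc0, Real.sqrt_sq (hν0 _)]
  -- conclude the operator norm bound
  have hop : ‖B‖ ≤ Real.sqrt c := by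
    rw [Matrix.l2_opNorm_def]
    refine ContinuousLinearMap.opNorm_le_bound _ (Real.sqrt_nonneg _) fun v => ?_
    have := main ((WithLp.equiv 2 (Fin n → ℂ)) v)
    simpa [Matrix.toEuclideanLin_apply, hν] using this
  calc ‖B‖ * ‖B‖ ≤ Real.sqrt c * Real.sqrt c :=
        mul_le_mul hop hop (norm_nonneg _) (Real.sqrt_nonneg _)
    _ = c := Real.mul_self_sqrt hc0

/-- Equivalence constants for the pinching onto the block-diagonal subalgebra determined
by `b : Fin n → Fin L`: (i) `(1/L)·‖X‖_op ≤ ‖P_b X‖_op` for positive semidefinite `X`;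
(ii) `(1/√L)·‖X‖_op ≤ √‖P_b (XᴴX)‖_op` for all `X`. -/
theorem pinching_opNorm_equivalence_constants
    (n L : ℕ) (hn : 1 ≤ n) (hL : 1 ≤ L) (b : Fin n → Fin L)
    (P : Matrix (Fin n) (Fin n) ℂ → Matrix (Fin n) (Fin n) ℂ)
    (hP : ∀ X, P X = Matrix.of fun j k => if b j = b k then X j k else 0) :
    (∀ X : Matrix (Fin n) (Fin n) ℂ, X.PosSemidef → (L : ℝ)⁻¹ * ‖X‖ ≤ ‖P X‖) ∧
    (∀ X : Matrix (Fin n) (Fin n) ℂ,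
      (Real.sqrt L)⁻¹ * ‖X‖ ≤ Real.sqrt ‖P (Xᴴ * X)‖) := by
  have hL0 : (0 : ℝ) < L := by exact_mod_cast hL
  constructor
  · intro X hX
    obtain ⟨B, rfl⟩ := (show ∃ B : Matrix (Fin n) (Fin n) ℂ, X = Bᴴ * B by
      open scoped MatrixOrder in exact CStarAlgebra.nonneg_iff_eq_star_mul_self.mp hX.nonneg)
    have key := pinching_key n L b B
    rw [hP, Matrix.l2_opNorm_conjTranspose_mul_self]
    rw [inv_mul_le_iff₀ hL0]
    exact key
  · intro X
    have key := pinching_key n L b X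
    rw [hP]
    have hPXnn : (0 : ℝ) ≤ ‖(Matrix.of fun j k => if b j = b k then (Xᴴ * X) j k else 0 :
        Matrix (Fin n) (Fin n) ℂ)‖ := norm_nonneg _
    have h1 : ‖X‖ ≤ Real.sqrt ((L : ℝ) *
        ‖(Matrix.of fun j k => if b j = b k then (Xᴴ * X) j k else 0 :
          Matrix (Fin n) (Fin n) ℂ)‖) := by
      rw [← Real.sqrt_mul_self (norm_nonneg X)]
      exact Real.sqrt_le_sqrt key
    rw [Real.sqrt_mul (le_of_lt hL0)] at h1
    rw [inv_mul_le_iff₀ (Real.sqrt_pos.mpr hL0)]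
    exact h1
end

section
/- Let L ≥ 1 and m, d : Fin L → ℕ with m(i) ≥ 1 and d(i) ≥ 1 for all i, and let ι = Σ (i : Fin L), Fin (m i) × Fin (d i). Let P_λ : M_ι(ℂ) → M_ι(ℂ) be the conditional expectation onto the subalgebra B_λ = ⊕_i (I_{m(i)} ⊗ M_{d(i)}(ℂ)), given by (P_λ X)(⟨i,s,p⟩, ⟨i',s',q⟩) = (1/m(i))·Σ_{t : Fin (m i)} X(⟨i,t,p⟩, ⟨i,t,q⟩) if i = i' and s = s', and 0 otherwise. Set r = Σ_i m(i) and ℓ = lcm{m(i) : i}. Then: (i) for every positive semidefinite X ∈ M_ι(ℂ), ‖P_λ(X)‖_op ≥ (1/(r·ℓ))·‖X‖_op; and (ii) for every X ∈ M_ι(ℂ), √‖P_λ(XᴴX)‖_op ≥ (1/√(r·ℓ))·‖X‖_op. -/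
open Matrix
open scoped Matrix.Norms.L2Operator ComplexOrder

/-- The trace-preserving conditional expectation onto the subalgebra
`B_λ = ⊕_i (I_{m i} ⊗ M_{d i}(ℂ))` of `M_ι(ℂ)`, where
`ι = Σ (i : Fin L), Fin (m i) × Fin (d i)`. -/
noncomputable def refinedPartitionCondExp {L : ℕ} (m d : Fin L → ℕ)
    (X : Matrix ((i : Fin L) × (Fin (m i) × Fin (d i)))
      ((i : Fin L) × (Fin (m i) × Fin (d i))) ℂ) :
    Matrix ((i : Fin L) × (Fin (m i) × Fin (d i)))
      ((i : Fin L) × (Fin (m i) × Fin (d i))) ℂ :=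
  Matrix.of fun x y =>
    if h : x.1 = y.1 then
      if (x.2.1 : ℕ) = (y.2.1 : ℕ) then
        (m x.1 : ℂ)⁻¹ * ∑ t : Fin (m x.1),
          X ⟨x.1, t, x.2.2⟩ ⟨x.1, t, Fin.cast (congrArg d h.symm) y.2.2⟩
      else 0
    else 0

namespace RefinedPartitionAux
set_option linter.unusedSectionVars false

section general
variable {n : Type*} [Fintype n] [DecidableEq n]

lemma euclid_norm_sq (v : n → ℂ) :
    ‖(EuclideanSpace.equiv n ℂ).symm v‖ ^ 2 = ∑ x, ‖v x‖ ^ 2 := by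
  rw [EuclideanSpace.norm_eq, Real.sq_sqrt (by positivity)]
  rfl

lemma re_dot_self (w : n → ℂ) : (star w ⬝ᵥ w).re = ∑ x, ‖w x‖ ^ 2 := by
  rw [dotProduct, Complex.re_sum]
  refine Finset.sum_congr rfl fun x _ => ?_
  rw [Pi.star_apply, Complex.star_def, ← Complex.normSq_eq_conj_mul_self,
    Complex.ofReal_re, Complex.normSq_eq_norm_sq]

lemma quad_re_le (A : Matrix n n ℂ) (v : n → ℂ) :
    (star v ⬝ᵥ A *ᵥ v).re ≤ ‖A‖ * ∑ x, ‖v x‖ ^ 2 := by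
  set w : EuclideanSpace ℂ n := (EuclideanSpace.equiv n ℂ).symm v with hw
  set u : EuclideanSpace ℂ n := (EuclideanSpace.equiv n ℂ).symm (A *ᵥ v) with hu
  have h1 : star v ⬝ᵥ A *ᵥ v = @inner ℂ _ _ w u := by
    rw [PiLp.inner_apply]
    simp only [dotProduct, RCLike.inner_apply, Pi.star_apply]
    exact Finset.sum_congr rfl fun x _ => mul_comm _ _
  have h2 : (star v ⬝ᵥ A *ᵥ v).re ≤ ‖w‖ * ‖u‖ := by
    rw [h1]
    exact (Complex.re_le_norm _).trans (norm_inner_le_norm w u)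
  have h3 : ‖u‖ ≤ ‖A‖ * ‖w‖ := A.l2_opNorm_mulVec w
  have h4 : ‖w‖ ^ 2 = ∑ x, ‖v x‖ ^ 2 := euclid_norm_sq v
  nlinarith [norm_nonneg w, norm_nonneg u, norm_nonneg A]

lemma quad_factor (B : Matrix n n ℂ) (v : n → ℂ) :
    star v ⬝ᵥ (Bᴴ * B) *ᵥ v = star (B *ᵥ v) ⬝ᵥ (B *ᵥ v) := by
  rw [← mulVec_mulVec, dotProduct_mulVec, star_mulVec]

lemma quad_factor_re (B : Matrix n n ℂ) (v : n → ℂ) :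
    (star v ⬝ᵥ (Bᴴ * B) *ᵥ v).re = ‖(EuclideanSpace.equiv n ℂ).symm (B *ᵥ v)‖ ^ 2 := by
  rw [quad_factor, re_dot_self, euclid_norm_sq]

lemma psd_norm_le {A : Matrix n n ℂ} (hA : A.PosSemidef) {c : ℝ} (hc : 0 ≤ c)
    (h : ∀ v : n → ℂ, (star v ⬝ᵥ A *ᵥ v).re ≤ c * ∑ x, ‖v x‖ ^ 2) : ‖A‖ ≤ c := by
  obtain ⟨B, rfl⟩ : ∃ B : Matrix n n ℂ, A = Bᴴ * B := by
    open scoped MatrixOrder in exact CStarAlgebra.nonneg_iff_eq_star_mul_self.mp hA.nonneg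
  have hBv : ∀ v : n → ℂ, ‖(EuclideanSpace.equiv n ℂ).symm (B *ᵥ v)‖ ≤
      Real.sqrt c * ‖(EuclideanSpace.equiv n ℂ).symm v‖ := by
    intro v
    have h1 : ‖(EuclideanSpace.equiv n ℂ).symm (B *ᵥ v)‖ ^ 2 ≤
        (Real.sqrt c * ‖(EuclideanSpace.equiv n ℂ).symm v‖) ^ 2 := by
      rw [← quad_factor_re, mul_pow, Real.sq_sqrt hc, euclid_norm_sq]
      exact h v
    have h2 : (0:ℝ) ≤ Real.sqrt c * ‖(EuclideanSpace.equiv n ℂ).symm v‖ := by positivity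
    nlinarith [norm_nonneg ((EuclideanSpace.equiv n ℂ).symm (B *ᵥ v))]
  have hop : ‖Bᴴ * B‖ ≤ ‖B‖ * Real.sqrt c := by
    rw [l2_opNorm_def]
    refine ContinuousLinearMap.opNorm_le_bound _ (by positivity) fun x => ?_
    have : ‖(EuclideanSpace.equiv n ℂ).symm ((Bᴴ * B) *ᵥ x)‖ ≤ ‖B‖ * Real.sqrt c * ‖x‖ := by
      rw [← mulVec_mulVec]
      calc ‖(EuclideanSpace.equiv n ℂ).symm (Bᴴ *ᵥ (B *ᵥ x))‖
          ≤ ‖Bᴴ‖ * ‖(EuclideanSpace.equiv n ℂ).symm (B *ᵥ x)‖ :=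
            Bᴴ.l2_opNorm_mulVec ((EuclideanSpace.equiv n ℂ).symm (B *ᵥ x))
        _ ≤ ‖B‖ * (Real.sqrt c * ‖x‖) := by
            rw [l2_opNorm_conjTranspose]
            exact mul_le_mul_of_nonneg_left (hBv x) (norm_nonneg _)
        _ = ‖B‖ * Real.sqrt c * ‖x‖ := by ring
    exact this
  have hcs : ‖Bᴴ * B‖ = ‖B‖ * ‖B‖ := l2_opNorm_conjTranspose_mul_self B
  rw [hcs] at hop ⊢
  nlinarith [norm_nonneg B, Real.sqrt_nonneg c, Real.sq_sqrt hc]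

lemma pinch {β : Type*} [Fintype β] {A : Matrix n n ℂ} (hA : A.PosSemidef) (f : β → n → ℂ) :
    (star (∑ b, f b) ⬝ᵥ A *ᵥ (∑ b, f b)).re ≤
      (Fintype.card β : ℝ) * ∑ b, (star (f b) ⬝ᵥ A *ᵥ (f b)).re := by
  obtain ⟨B, rfl⟩ : ∃ B : Matrix n n ℂ, A = Bᴴ * B := by
    open scoped MatrixOrder in exact CStarAlgebra.nonneg_iff_eq_star_mul_self.mp hA.nonneg
  have hsum : B *ᵥ (∑ b, f b) = ∑ b, B *ᵥ f b := by
    have := map_sum B.mulVecLin f Finset.univ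
    simpa only [mulVecLin_apply] using this
  rw [quad_factor_re, hsum]
  simp only [quad_factor_re]
  have hmap : (EuclideanSpace.equiv n ℂ).symm (∑ b, B *ᵥ f b) =
      ∑ b, (EuclideanSpace.equiv n ℂ).symm (B *ᵥ f b) :=
    map_sum (EuclideanSpace.equiv n ℂ).symm.toLinearEquiv.toLinearMap _ Finset.univ
  rw [hmap]
  calc ‖∑ b, (EuclideanSpace.equiv n ℂ).symm (B *ᵥ f b)‖ ^ 2
      ≤ (∑ b, ‖(EuclideanSpace.equiv n ℂ).symm (B *ᵥ f b)‖) ^ 2 := by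
        have := norm_sum_le Finset.univ fun b => (EuclideanSpace.equiv n ℂ).symm (B *ᵥ f b)
        exact pow_le_pow_left₀ (norm_nonneg _) this 2
    _ ≤ (Fintype.card β : ℝ) * ∑ b, ‖(EuclideanSpace.equiv n ℂ).symm (B *ᵥ f b)‖ ^ 2 := by
        have := sq_sum_le_card_mul_sum_sq (s := (Finset.univ : Finset β))
            (f := fun b => ‖(EuclideanSpace.equiv n ℂ).symm (B *ᵥ f b)‖)
        simpa only [Finset.card_univ] using this

end general

variable {L : ℕ} (m d : Fin L → ℕ)

/-- A vector supported on the `(i,t)` block. -/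
def bv (i : Fin L) (t : Fin (m i)) (φ : Fin (d i) → ℂ) :
    ((j : Fin L) × (Fin (m j) × Fin (d j))) → ℂ :=
  fun x => if h : x.1 = i then
    (if (x.2.1 : ℕ) = (t : ℕ) then φ (Fin.cast (congrArg d h) x.2.2) else 0) else 0

lemma sum_bv (i : Fin L) (t : Fin (m i)) (φ : Fin (d i) → ℂ)
    (F : ((j : Fin L) × (Fin (m j) × Fin (d j))) → ℂ) :
    ∑ x, bv m d i t φ x * F x = ∑ p, φ p * F ⟨i, (t, p)⟩ := by
  rw [← Finset.univ_sigma_univ, Finset.sum_sigma]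
  rw [Finset.sum_eq_single_of_mem i (Finset.mem_univ i)]
  · rw [Fintype.sum_prod_type]
    simp only [bv, dif_pos rfl]
    rw [Finset.sum_comm]
    simp [Fin.val_eq_val]
  · intro j _ hj
    apply Finset.sum_eq_zero
    intro y _
    simp [bv, dif_neg hj]

lemma sum_bv_norm (i : Fin L) (t : Fin (m i)) (φ : Fin (d i) → ℂ) :
    ∑ x, ‖bv m d i t φ x‖ ^ 2 = ∑ p, ‖φ p‖ ^ 2 := by
  rw [← Finset.univ_sigma_univ, Finset.sum_sigma]
  rw [Finset.sum_eq_single_of_mem i (Finset.mem_univ i)]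
  · rw [Fintype.sum_prod_type]
    simp only [bv, dif_pos rfl]
    rw [Finset.sum_comm]
    simp [Fin.val_eq_val, apply_ite (fun z : ℂ => ‖z‖), apply_ite (fun r : ℝ => r ^ 2),
      Finset.sum_ite_eq']
  · intro j _ hj
    apply Finset.sum_eq_zero
    intro y _
    simp [bv, dif_neg hj]

lemma bv_star (i : Fin L) (t : Fin (m i)) (φ : Fin (d i) → ℂ) :
    star (bv m d i t φ) = bv m d i t (fun p => (starRingEnd ℂ) (φ p)) := by
  funext x
  simp only [Pi.star_apply, bv]
  split_ifs <;> simp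

lemma quad_bv (X : Matrix ((j : Fin L) × (Fin (m j) × Fin (d j)))
      ((j : Fin L) × (Fin (m j) × Fin (d j))) ℂ)
    (i : Fin L) (t : Fin (m i)) (φ : Fin (d i) → ℂ) :
    star (bv m d i t φ) ⬝ᵥ X *ᵥ bv m d i t φ =
      ∑ p, ∑ q, (starRingEnd ℂ) (φ p) * (X ⟨i, (t, p)⟩ ⟨i, (t, q)⟩ * φ q) := by
  rw [bv_star, dotProduct, sum_bv]
  refine Finset.sum_congr rfl fun p _ => ?_
  have h1 : (X *ᵥ bv m d i t φ) ⟨i, (t, p)⟩ = ∑ q, φ q * X ⟨i, (t, p)⟩ ⟨i, (t, q)⟩ := by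
    rw [mulVec, dotProduct]
    simp_rw [mul_comm]
    exact sum_bv m d i t φ _
  rw [h1, Finset.mul_sum]
  refine Finset.sum_congr rfl fun q _ => by ring

lemma condexp_entry (X : Matrix ((j : Fin L) × (Fin (m j) × Fin (d j)))
      ((j : Fin L) × (Fin (m j) × Fin (d j))) ℂ)
    (i : Fin L) (t : Fin (m i)) (p q : Fin (d i)) :
    refinedPartitionCondExp m d X ⟨i, (t, p)⟩ ⟨i, (t, q)⟩ =
      (m i : ℂ)⁻¹ * ∑ t' : Fin (m i), X ⟨i, (t', p)⟩ ⟨i, (t', q)⟩ := by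
  simp [refinedPartitionCondExp]

lemma condexp_quad (X : Matrix ((j : Fin L) × (Fin (m j) × Fin (d j)))
      ((j : Fin L) × (Fin (m j) × Fin (d j))) ℂ)
    (i : Fin L) (t : Fin (m i)) (φ : Fin (d i) → ℂ) :
    star (bv m d i t φ) ⬝ᵥ refinedPartitionCondExp m d X *ᵥ bv m d i t φ =
      (m i : ℂ)⁻¹ * ∑ t' : Fin (m i), star (bv m d i t' φ) ⬝ᵥ X *ᵥ bv m d i t' φ := by
  simp_rw [quad_bv, condexp_entry]
  rw [Finset.mul_sum]
  have key : ∀ p : Fin (d i), ∀ q : Fin (d i),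
      (starRingEnd ℂ) (φ p) * ((m i : ℂ)⁻¹ * (∑ t' : Fin (m i), X ⟨i, (t', p)⟩ ⟨i, (t', q)⟩) * φ q)
        = ∑ t' : Fin (m i), (m i : ℂ)⁻¹ *
            ((starRingEnd ℂ) (φ p) * (X ⟨i, (t', p)⟩ ⟨i, (t', q)⟩ * φ q)) := by
    intro p q
    simp only [Finset.mul_sum, Finset.sum_mul]
    refine Finset.sum_congr rfl fun t' _ => by ring
  simp_rw [key, Finset.mul_sum]
  calc ∑ p, ∑ q, ∑ t' : Fin (m i), (m i : ℂ)⁻¹ *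
          ((starRingEnd ℂ) (φ p) * (X ⟨i, (t', p)⟩ ⟨i, (t', q)⟩ * φ q))
      = ∑ p, ∑ t' : Fin (m i), ∑ q, (m i : ℂ)⁻¹ *
          ((starRingEnd ℂ) (φ p) * (X ⟨i, (t', p)⟩ ⟨i, (t', q)⟩ * φ q)) :=
        Finset.sum_congr rfl fun p _ => Finset.sum_comm
    _ = ∑ t' : Fin (m i), ∑ p, ∑ q, (m i : ℂ)⁻¹ *
          ((starRingEnd ℂ) (φ p) * (X ⟨i, (t', p)⟩ ⟨i, (t', q)⟩ * φ q)) :=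
        Finset.sum_comm

lemma bv_decomp (v : ((j : Fin L) × (Fin (m j) × Fin (d j))) → ℂ) :
    ∑ b : (i : Fin L) × Fin (m i), bv m d b.1 b.2 (fun p => v ⟨b.1, (b.2, p)⟩) = v := by
  funext x
  obtain ⟨j, s, p⟩ := x
  rw [Finset.sum_apply]
  rw [← Finset.univ_sigma_univ, Finset.sum_sigma]
  rw [Finset.sum_eq_single_of_mem j (Finset.mem_univ j)]
  · simp only [bv, dif_pos rfl]
    simp [Fin.val_eq_val, Finset.sum_ite_eq]
  · intro i _ hi
    apply Finset.sum_eq_zero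
    intro t _
    exact dif_neg fun h => hi h.symm

end RefinedPartitionAux

open RefinedPartitionAux

/-- Equivalence constants for the conditional expectation onto
`B_λ = ⊕_i (I_{m i} ⊗ M_{d i}(ℂ))`: with `r = Σ_i m i` and `ℓ = lcm {m i}`,
(i) `‖P_λ X‖_op ≥ (1/(rℓ))·‖X‖_op` for positive semidefinite `X`, and
(ii) `√‖P_λ(XᴴX)‖_op ≥ (1/√(rℓ))·‖X‖_op` for all `X`. -/
theorem refinedPartitionCondExp_opNorm_equivalence
    (L : ℕ) (hL : 1 ≤ L) (m d : Fin L → ℕ)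
    (hm : ∀ i, 1 ≤ m i) (hd : ∀ i, 1 ≤ d i)
    (r ℓ : ℕ) (hr : r = ∑ i, m i) (hℓ : ℓ = Finset.univ.lcm m) :
    (∀ X : Matrix ((i : Fin L) × (Fin (m i) × Fin (d i)))
        ((i : Fin L) × (Fin (m i) × Fin (d i))) ℂ, X.PosSemidef →
      ‖refinedPartitionCondExp m d X‖ ≥ ((r : ℝ) * ℓ)⁻¹ * ‖X‖) ∧
    (∀ X : Matrix ((i : Fin L) × (Fin (m i) × Fin (d i)))
        ((i : Fin L) × (Fin (m i) × Fin (d i))) ℂ,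
      Real.sqrt ‖refinedPartitionCondExp m d (Xᴴ * X)‖ ≥
        (Real.sqrt ((r : ℝ) * ℓ))⁻¹ * ‖X‖) := by
  have hL' : Nonempty (Fin L) := ⟨⟨0, hL⟩⟩
  have hℓpos : 0 < ℓ := by
    rw [hℓ]
    refine Nat.pos_of_ne_zero fun h0 => ?_
    rw [Finset.lcm_eq_zero_iff] at h0
    obtain ⟨i, -, hi⟩ := h0
    have := hm i
    omega
  have hrpos : 0 < r := by
    rw [hr]
    exact Finset.sum_pos (fun i _ => hm i) Finset.univ_nonempty
  have hml : ∀ i, (m i : ℝ) ≤ (ℓ : ℝ) := by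
    intro i
    exact_mod_cast Nat.le_of_dvd hℓpos (hℓ ▸ Finset.dvd_lcm (Finset.mem_univ i))
  have hrl_pos : (0:ℝ) < (r : ℝ) * ℓ := by positivity
  -- the main bound
  have main : ∀ X : Matrix ((i : Fin L) × (Fin (m i) × Fin (d i)))
      ((i : Fin L) × (Fin (m i) × Fin (d i))) ℂ, X.PosSemidef →
      ‖X‖ ≤ ((r : ℝ) * ℓ) * ‖refinedPartitionCondExp m d X‖ := by
    intro X hX
    set P := refinedPartitionCondExp m d X with hP
    refine psd_norm_le hX (by positivity) fun v => ?_
    set f : ((i : Fin L) × Fin (m i)) → ((i : Fin L) × (Fin (m i) × Fin (d i))) → ℂ :=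
      fun b => bv m d b.1 b.2 (fun p => v ⟨b.1, (b.2, p)⟩) with hf
    have hdecomp : ∑ b, f b = v := bv_decomp m d v
    have hcard : (Fintype.card ((i : Fin L) × Fin (m i)) : ℝ) = r := by
      rw [hr]
      push_cast [Fintype.card_sigma, Fintype.card_fin]
      rfl
    have step1 : (star v ⬝ᵥ X *ᵥ v).re ≤ (r : ℝ) * ∑ b, (star (f b) ⬝ᵥ X *ᵥ (f b)).re := by
      have := pinch hX f
      rw [hdecomp, hcard] at this
      exact this
    -- blockwise bounds
    have qnonneg : ∀ (i : Fin L) (t' : Fin (m i)) (φ : Fin (d i) → ℂ),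
        0 ≤ (star (bv m d i t' φ) ⬝ᵥ X *ᵥ bv m d i t' φ).re := by
      intro i t' φ
      have := hX.dotProduct_mulVec_nonneg (bv m d i t' φ)
      exact (Complex.le_def.mp this).1
    have step2 : ∀ b : (i : Fin L) × Fin (m i),
        (star (f b) ⬝ᵥ X *ᵥ (f b)).re ≤
          (ℓ : ℝ) * (‖P‖ * ∑ p, ‖v ⟨b.1, (b.2, p)⟩‖ ^ 2) := by
      rintro ⟨i, t⟩
      set φ : Fin (d i) → ℂ := fun p => v ⟨i, (t, p)⟩ with hφ
      have hPq : (star (bv m d i t φ) ⬝ᵥ P *ᵥ bv m d i t φ).re =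
          ((m i : ℝ))⁻¹ * ∑ t' : Fin (m i),
            (star (bv m d i t' φ) ⬝ᵥ X *ᵥ bv m d i t' φ).re := by
        rw [hP, condexp_quad]
        rw [show ((m i : ℂ))⁻¹ = Complex.ofReal ((m i : ℝ))⁻¹ by push_cast; ring]
        rw [Complex.re_ofReal_mul, Complex.re_sum]
      have hsum_ge : (star (bv m d i t φ) ⬝ᵥ X *ᵥ bv m d i t φ).re ≤
          ∑ t' : Fin (m i), (star (bv m d i t' φ) ⬝ᵥ X *ᵥ bv m d i t' φ).re :=
        Finset.single_le_sum (fun t' _ => qnonneg i t' φ) (Finset.mem_univ t)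
      have hmipos : (0:ℝ) < (m i : ℝ) := by exact_mod_cast hm i
      have hb1 : (star (f ⟨i, t⟩) ⬝ᵥ X *ᵥ (f ⟨i, t⟩)).re ≤
          (m i : ℝ) * (star (bv m d i t φ) ⬝ᵥ P *ᵥ bv m d i t φ).re := by
        rw [hPq, ← mul_assoc, mul_inv_cancel₀ hmipos.ne', one_mul]
        exact hsum_ge
      have hPnonneg : 0 ≤ (star (bv m d i t φ) ⬝ᵥ P *ᵥ bv m d i t φ).re := by
        rw [hPq]
        exact mul_nonneg (by positivity) (Finset.sum_nonneg fun t' _ => qnonneg i t' φ)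
      have hb2 : (star (bv m d i t φ) ⬝ᵥ P *ᵥ bv m d i t φ).re ≤
          ‖P‖ * ∑ p, ‖φ p‖ ^ 2 := by
        have := quad_re_le P (bv m d i t φ)
        rwa [sum_bv_norm] at this
      calc (star (f ⟨i, t⟩) ⬝ᵥ X *ᵥ (f ⟨i, t⟩)).re
          ≤ (m i : ℝ) * (star (bv m d i t φ) ⬝ᵥ P *ᵥ bv m d i t φ).re := hb1
        _ ≤ (ℓ : ℝ) * (star (bv m d i t φ) ⬝ᵥ P *ᵥ bv m d i t φ).re :=
            mul_le_mul_of_nonneg_right (hml i) hPnonneg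
        _ ≤ (ℓ : ℝ) * (‖P‖ * ∑ p, ‖φ p‖ ^ 2) :=
            mul_le_mul_of_nonneg_left hb2 (by positivity)
    have hnorm : ∑ b : (i : Fin L) × Fin (m i), ∑ p, ‖v ⟨b.1, (b.2, p)⟩‖ ^ 2 =
        ∑ x, ‖v x‖ ^ 2 := by
      rw [show (Finset.univ : Finset ((i : Fin L) × Fin (m i))) =
        Finset.univ.sigma fun _ => Finset.univ from (Finset.univ_sigma_univ).symm,
        Finset.sum_sigma]
      rw [show (Finset.univ : Finset ((i : Fin L) × (Fin (m i) × Fin (d i)))) =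
        Finset.univ.sigma fun _ => Finset.univ from (Finset.univ_sigma_univ).symm,
        Finset.sum_sigma]
      refine Finset.sum_congr rfl fun i _ => ?_
      rw [Fintype.sum_prod_type]
    calc (star v ⬝ᵥ X *ᵥ v).re
        ≤ (r : ℝ) * ∑ b, (star (f b) ⬝ᵥ X *ᵥ (f b)).re := step1
      _ ≤ (r : ℝ) * ∑ b : (i : Fin L) × Fin (m i),
            (ℓ : ℝ) * (‖P‖ * ∑ p, ‖v ⟨b.1, (b.2, p)⟩‖ ^ 2) := by
          refine mul_le_mul_of_nonneg_left (Finset.sum_le_sum fun b _ => step2 b)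
            (by positivity)
      _ = (r : ℝ) * ℓ * ‖P‖ * ∑ x, ‖v x‖ ^ 2 := by
          rw [← Finset.mul_sum, ← Finset.mul_sum, hnorm]; ring
      _ = (r : ℝ) * ℓ * ‖P‖ * ∑ x, ‖v x‖ ^ 2 := rfl
  constructor
  · intro X hX
    have h := main X hX
    rw [ge_iff_le, inv_mul_le_iff₀ hrl_pos]
    linarith [h]
  · intro X
    have hpsd : (Xᴴ * X).PosSemidef := posSemidef_conjTranspose_mul_self X
    have h := main _ hpsd
    rw [l2_opNorm_conjTranspose_mul_self] at h
    have h2 : ((r : ℝ) * ℓ)⁻¹ * (‖X‖ * ‖X‖) ≤ ‖refinedPartitionCondExp m d (Xᴴ * X)‖ := by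
      rw [inv_mul_le_iff₀ hrl_pos]
      linarith [h]
    have h3 := Real.sqrt_le_sqrt h2
    rw [Real.sqrt_mul (by positivity), Real.sqrt_inv, Real.sqrt_mul_self (norm_nonneg X)] at h3
    exact h3
end

section
/- Let N ≥ 1 and for each k : Fin N let L_k ≥ 1, m_k, d_k : Fin L_k → ℕ with all values ≥ 1, index type ι_k = Σ (i : Fin L_k), Fin (m_k i) × Fin (d_k i), and conditional expectation P_{λ_k} : M_{ι_k}(ℂ) → M_{ι_k}(ℂ) defined by (P_{λ_k} X)(⟨i,s,p⟩, ⟨i',s',q⟩) = (1/m_k(i))·Σ_t X(⟨i,t,p⟩, ⟨i,t,q⟩) if i = i' and s = s', and 0 otherwise. Let A = Π_{k} M_{ι_k}(ℂ) with componentwise operations and the supremum norm, and let P : A → A act componentwise by the P_{λ_k}. Set r = lcm{r_k : k}, where r_k = Σ_i m_k(i), and ℓ = lcm{m_k(i) : k, i}. Then: (i) if X ∈ A has every component positive semidefinite, then ‖P(X)‖ ≥ (1/(r·ℓ))·‖X‖; and (ii) for every X ∈ A, √‖P(X*X)‖ ≥ (1/√(r·ℓ))·‖X‖, where X* is the componentwise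 conjugate transpose. -/
open Matrix
open scoped Matrix.Norms.L2Operator ComplexOrder

namespace FrobeniusRieffelAux

open scoped ComplexConjugate

lemma sum_rotate {α β γ M : Type*} [Fintype α] [Fintype β] [Fintype γ]
    [AddCommMonoid M] (f : α → β → γ → M) :
    ∑ a, ∑ b, ∑ c, f a b c = ∑ c, ∑ a, ∑ b, f a b c := by
  have h : ∑ a, ∑ b, ∑ c, f a b c = ∑ a, ∑ c, ∑ b, f a b c :=
    Finset.sum_congr rfl fun _ _ => Finset.sum_comm
  rw [h]
  exact Finset.sum_comm

variable {L : ℕ} (m d : Fin L → ℕ)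

noncomputable def emb (i : Fin L) (t : Fin (m i)) (w : Fin (d i) → ℂ) :
    ((j : Fin L) × (Fin (m j) × Fin (d j))) → ℂ :=
  fun x => ∑ p, if x = ⟨i, t, p⟩ then w p else 0

lemma emb_qf (X : Matrix ((j : Fin L) × (Fin (m j) × Fin (d j)))
    ((j : Fin L) × (Fin (m j) × Fin (d j))) ℂ) (i : Fin L) (t : Fin (m i))
    (w : Fin (d i) → ℂ) :
    star (emb m d i t w) ⬝ᵥ X *ᵥ (emb m d i t w)
      = ∑ p, ∑ q, conj (w p) * X ⟨i, t, p⟩ ⟨i, t, q⟩ * w q := by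
  calc star (emb m d i t w) ⬝ᵥ X *ᵥ (emb m d i t w)
      = ∑ x, ∑ p, (if x = ⟨i, t, p⟩ then conj (w p) else 0) *
          (∑ y, X x y * emb m d i t w y) := by
        refine Finset.sum_congr rfl fun x _ => ?_
        rw [← Finset.sum_mul]
        congr 1
        simp [emb, apply_ite star, RCLike.star_def]
    _ = ∑ p, conj (w p) * (∑ y, X ⟨i, t, p⟩ y * emb m d i t w y) := by
        rw [Finset.sum_comm]
        refine Finset.sum_congr rfl fun p _ => ?_
        simp [ite_mul, Finset.sum_ite_eq']
    _ = ∑ p, conj (w p) * (∑ q, ∑ y, X ⟨i, t, p⟩ y * (if y = ⟨i, t, q⟩ then w q else 0)) := by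
        refine Finset.sum_congr rfl fun p _ => ?_
        congr 1
        rw [Finset.sum_comm]
        refine Finset.sum_congr rfl fun y _ => ?_
        simp [emb, Finset.mul_sum]
    _ = ∑ p, ∑ q, conj (w p) * X ⟨i, t, p⟩ ⟨i, t, q⟩ * w q := by
        refine Finset.sum_congr rfl fun p _ => ?_
        rw [Finset.mul_sum]
        refine Finset.sum_congr rfl fun q _ => ?_
        simp [mul_ite, Finset.sum_ite_eq', mul_assoc]


lemma sum_expand {M : Type*} [AddCommMonoid M]
    (g : ((j : Fin L) × (Fin (m j) × Fin (d j))) → M) :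
    ∑ x : ((j : Fin L) × (Fin (m j) × Fin (d j))), g x
      = ∑ j, ∑ s, ∑ p, g ⟨j, s, p⟩ := by
  rw [← Finset.univ_sigma_univ, Finset.sum_sigma]
  simp [Fintype.sum_prod_type]

lemma condexp_qf (X : Matrix ((j : Fin L) × (Fin (m j) × Fin (d j)))
    ((j : Fin L) × (Fin (m j) × Fin (d j))) ℂ)
    (v : ((j : Fin L) × (Fin (m j) × Fin (d j))) → ℂ) :
    star v ⬝ᵥ (refinedPartitionCondExp m d X) *ᵥ v
      = ∑ j, (m j : ℂ)⁻¹ * ∑ s, ∑ t, ∑ p, ∑ q,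
          conj (v ⟨j, s, p⟩) * X ⟨j, t, p⟩ ⟨j, t, q⟩ * v ⟨j, s, q⟩ := by
  have hcast : ∀ (j : Fin L) (pf : d j = d j) (q : Fin (d j)), Fin.cast pf q = q :=
    fun _ _ _ => Fin.ext rfl
  calc star v ⬝ᵥ (refinedPartitionCondExp m d X) *ᵥ v
      = ∑ x, ∑ y, conj (v x) * ((refinedPartitionCondExp m d X) x y * v y) := by
        simp only [dotProduct, mulVec, Pi.star_apply, RCLike.star_def, Finset.mul_sum]
    _ = ∑ j, ∑ s, ∑ p, ∑ j', ∑ s', ∑ q, conj (v ⟨j, s, p⟩) *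
          ((refinedPartitionCondExp m d X) ⟨j, s, p⟩ ⟨j', s', q⟩ * v ⟨j', s', q⟩) := by
        rw [sum_expand]
        exact Finset.sum_congr rfl fun j _ => Finset.sum_congr rfl fun s _ =>
          Finset.sum_congr rfl fun p _ => sum_expand m d _
    _ = ∑ j, ∑ s, ∑ p, ∑ s', ∑ q, conj (v ⟨j, s, p⟩) *
          ((refinedPartitionCondExp m d X) ⟨j, s, p⟩ ⟨j, s', q⟩ * v ⟨j, s', q⟩) := by
        refine Finset.sum_congr rfl fun j _ => Finset.sum_congr rfl fun s _ =>
          Finset.sum_congr rfl fun p _ => ?_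
        refine Finset.sum_eq_single j (fun j' _ hj' => ?_) (by simp)
        simp [refinedPartitionCondExp, (Ne.symm hj' : ¬ j = j')]
    _ = ∑ j, ∑ s, ∑ p, ∑ q, conj (v ⟨j, s, p⟩) *
          (((m j : ℂ)⁻¹ * ∑ t, X ⟨j, t, p⟩ ⟨j, t, q⟩) * v ⟨j, s, q⟩) := by
        refine Finset.sum_congr rfl fun j _ => Finset.sum_congr rfl fun s _ =>
          Finset.sum_congr rfl fun p _ => ?_
        rw [Finset.sum_comm]
        refine (Finset.sum_congr rfl fun q _ => ?_)
        simp [refinedPartitionCondExp, hcast, Fin.val_eq_val, mul_ite, ite_mul,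
          mul_zero, zero_mul, Finset.sum_ite_eq]
    _ = ∑ j, (m j : ℂ)⁻¹ * ∑ s, ∑ t, ∑ p, ∑ q,
          conj (v ⟨j, s, p⟩) * X ⟨j, t, p⟩ ⟨j, t, q⟩ * v ⟨j, s, q⟩ := by
        refine Finset.sum_congr rfl fun j _ => ?_
        rw [Finset.mul_sum]
        refine Finset.sum_congr rfl fun s _ => ?_
        have h1 : ∀ p q, conj (v ⟨j, s, p⟩) *
            (((m j : ℂ)⁻¹ * ∑ t, X ⟨j, t, p⟩ ⟨j, t, q⟩) * v ⟨j, s, q⟩)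
            = ∑ t, (m j : ℂ)⁻¹ *
              (conj (v ⟨j, s, p⟩) * X ⟨j, t, p⟩ ⟨j, t, q⟩ * v ⟨j, s, q⟩) := by
          intro p q
          simp only [Finset.mul_sum, Finset.sum_mul]
          exact Finset.sum_congr rfl fun t _ => by ring
        simp only [h1]
        rw [sum_rotate]
        simp only [Finset.mul_sum]

lemma emb_decomp (v : ((j : Fin L) × (Fin (m j) × Fin (d j))) → ℂ) :
    ∑ j, ∑ s, emb m d j s (fun p => v ⟨j, s, p⟩) = v := by
  funext x
  simp only [Finset.sum_apply, emb]
  rw [← sum_expand m d (fun x' => if x = x' then v x' else 0)]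
  simp [Finset.sum_ite_eq]

open scoped MatrixOrder in
lemma key_norm (hm : ∀ i, 1 ≤ m i) (R C : ℕ)
    (hR : (∑ i, m i) ≤ R) (hC : ∀ i, m i ≤ C)
    (X : Matrix ((j : Fin L) × (Fin (m j) × Fin (d j)))
      ((j : Fin L) × (Fin (m j) × Fin (d j))) ℂ)
    (hX : X.PosSemidef) :
    ‖X‖ ≤ (R : ℝ) * C * ‖refinedPartitionCondExp m d X‖ := by
  classical
  set Y := refinedPartitionCondExp m d X with hYdef
  have hY0 : (0:ℝ) ≤ ‖Y‖ := norm_nonneg _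
  set S := CFC.sqrt X with hSdef
  have hSh : Sᴴ = S := (CFC.sqrt_nonneg X).posSemidef.isHermitian
  have hSS : S * S = X := CFC.sqrt_mul_sqrt_self X hX.nonneg
  set E := (WithLp.equiv 2 (((j : Fin L) × (Fin (m j) × Fin (d j))) → ℂ)).symm with hE
  have qf_eq : ∀ u, star u ⬝ᵥ X *ᵥ u = ((‖E (S *ᵥ u)‖ ^ 2 : ℝ) : ℂ) := by
    intro u
    have hsm : star u ᵥ* S = star (S *ᵥ u) := by rw [Matrix.star_mulVec, hSh]
    rw [← hSS, ← Matrix.mulVec_mulVec, Matrix.dotProduct_mulVec, hsm,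
      dotProduct_comm, show (S *ᵥ u) ⬝ᵥ star (S *ᵥ u) = inner ℂ (E (S *ᵥ u)) (E (S *ᵥ u)) from rfl,
      inner_self_eq_norm_sq_to_K]
    push_cast
    rfl
  have qf_re : ∀ u, ‖E (S *ᵥ u)‖ ^ 2 = (star u ⬝ᵥ X *ᵥ u).re := by
    intro u; rw [qf_eq, Complex.ofReal_re]
  have main : ∀ v, (star v ⬝ᵥ X *ᵥ v).re ≤ (R:ℝ) * C * ‖Y‖ * ‖E v‖ ^ 2 := by
    intro v
    set G : (j : Fin L) → Fin (m j) → Fin (m j) → ℝ := fun j s t =>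
      (∑ p, ∑ q, conj (v ⟨j, s, p⟩) * X ⟨j, t, p⟩ ⟨j, t, q⟩ * v ⟨j, s, q⟩).re with hG
    have hF : ∀ (j : Fin L) (s t : Fin (m j)),
        (∑ p, ∑ q, conj (v ⟨j, s, p⟩) * X ⟨j, t, p⟩ ⟨j, t, q⟩ * v ⟨j, s, q⟩)
          = star (emb m d j t (fun p => v ⟨j, s, p⟩)) ⬝ᵥ X *ᵥ
              (emb m d j t (fun p => v ⟨j, s, p⟩)) :=
      fun j s t => (emb_qf m d X j t _).symm
    have hG0 : ∀ (j : Fin L) (s t : Fin (m j)), 0 ≤ G j s t := by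
      intro j s t
      have h := hX.dotProduct_mulVec_nonneg (emb m d j t (fun p => v ⟨j, s, p⟩))
      have h2 := (Complex.le_def.mp h).1
      simp only [hG]
      rw [hF j s t]
      simpa using h2
    have hGss : ∀ (j : Fin L) (s : Fin (m j)),
        G j s s = ‖E (S *ᵥ emb m d j s (fun p => v ⟨j, s, p⟩))‖ ^ 2 := by
      intro j s
      simp only [hG]
      rw [hF j s s, ← qf_re]
    -- step 1 : real form of the conditional expectation quadratic form
    have step1 : (star v ⬝ᵥ Y *ᵥ v).re = ∑ j, (m j : ℝ)⁻¹ * ∑ s, ∑ t, G j s t := by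
      rw [hYdef, condexp_qf, Complex.re_sum]
      refine Finset.sum_congr rfl fun j _ => ?_
      rw [show ((m j : ℕ) : ℂ)⁻¹ = Complex.ofReal ((m j : ℝ)⁻¹) by push_cast; ring,
        Complex.re_ofReal_mul, Complex.re_sum]
      congr 1
      refine Finset.sum_congr rfl fun s _ => ?_
      rw [Complex.re_sum]
    -- step 2
    have step2 : ∑ j, ∑ s, G j s s ≤ (C:ℝ) * (star v ⬝ᵥ Y *ᵥ v).re := by
      rw [step1, Finset.mul_sum]
      refine Finset.sum_le_sum fun j _ => ?_
      have hmj : (0:ℝ) < (m j : ℝ) := by exact_mod_cast hm j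
      have h1 : ∑ s, G j s s ≤ ∑ s, ∑ t, G j s t :=
        Finset.sum_le_sum fun s _ =>
          Finset.single_le_sum (fun t _ => hG0 j s t) (Finset.mem_univ s)
      have h2 : (0:ℝ) ≤ ∑ s, ∑ t, G j s t :=
        Finset.sum_nonneg fun s _ => Finset.sum_nonneg fun t _ => hG0 j s t
      calc ∑ s, G j s s ≤ ∑ s, ∑ t, G j s t := h1
        _ = (m j : ℝ) * ((m j : ℝ)⁻¹ * ∑ s, ∑ t, G j s t) := by
            rw [← mul_assoc, mul_inv_cancel₀ (ne_of_gt hmj), one_mul]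
        _ ≤ (C : ℝ) * ((m j : ℝ)⁻¹ * ∑ s, ∑ t, G j s t) := by
            refine mul_le_mul_of_nonneg_right ?_ (by positivity)
            exact_mod_cast hC j
    -- step 3 : Cauchy-Schwarz
    have step3 : (star v ⬝ᵥ X *ᵥ v).re ≤ (R:ℝ) * ∑ j, ∑ s, G j s s := by
      rw [← qf_re]
      have hv : v = ∑ j, ∑ s, emb m d j s (fun p => v ⟨j, s, p⟩) := (emb_decomp m d v).symm
      have hxv : E (S *ᵥ v) = ∑ j, ∑ s, E (S *ᵥ emb m d j s (fun p => v ⟨j, s, p⟩)) := by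
        conv_lhs => rw [hv]
        have : S *ᵥ (∑ j, ∑ s, emb m d j s (fun p => v ⟨j, s, p⟩))
            = ∑ j, ∑ s, S *ᵥ emb m d j s (fun p => v ⟨j, s, p⟩) := by
          simp only [← Matrix.mulVecLin_apply, map_sum]
        rw [this]
        simp only [hE, WithLp.equiv_symm_apply, WithLp.toLp_sum]
      set T := (Finset.univ : Finset (Fin L)).sigma
        (fun j => (Finset.univ : Finset (Fin (m j)))) with hT
      have hsig : ∀ (f : (j : Fin L) → Fin (m j) → ℝ),
          (∑ b ∈ T, f b.1 b.2) = ∑ j, ∑ s, f j s := fun f => Finset.sum_sigma _ _ _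
      have hsigE : (∑ b ∈ T, E (S *ᵥ emb m d b.1 b.2 (fun p => v ⟨b.1, b.2, p⟩)))
          = ∑ j, ∑ s, E (S *ᵥ emb m d j s (fun p => v ⟨j, s, p⟩)) :=
        Finset.sum_sigma _ _ _
      rw [hxv, ← hsigE]
      calc ‖∑ b ∈ T, E (S *ᵥ emb m d b.1 b.2 (fun p => v ⟨b.1, b.2, p⟩))‖ ^ 2
          ≤ (∑ b ∈ T, ‖E (S *ᵥ emb m d b.1 b.2 (fun p => v ⟨b.1, b.2, p⟩))‖) ^ 2 := by
            have := norm_sum_le T (fun b => E (S *ᵥ emb m d b.1 b.2 (fun p => v ⟨b.1, b.2, p⟩)))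
            exact pow_le_pow_left₀ (norm_nonneg _) this 2
        _ ≤ (T.card : ℝ) * ∑ b ∈ T, ‖E (S *ᵥ emb m d b.1 b.2 (fun p => v ⟨b.1, b.2, p⟩))‖ ^ 2 :=
            sq_sum_le_card_mul_sum_sq
        _ ≤ (R : ℝ) * ∑ j, ∑ s, G j s s := by
            have hcard : (T.card : ℝ) ≤ (R : ℝ) := by
              rw [hT, Finset.card_sigma]
              simp only [Finset.card_univ, Fintype.card_fin]
              exact_mod_cast hR
            have hsum : (∑ b ∈ T, ‖E (S *ᵥ emb m d b.1 b.2 (fun p => v ⟨b.1, b.2, p⟩))‖ ^ 2)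
                = ∑ j, ∑ s, G j s s := by
              rw [hsig (fun j s => ‖E (S *ᵥ emb m d j s (fun p => v ⟨j, s, p⟩))‖ ^ 2)]
              exact Finset.sum_congr rfl fun j _ => Finset.sum_congr rfl fun s _ =>
                (hGss j s).symm
            rw [hsum]
            refine mul_le_mul_of_nonneg_right hcard ?_
            exact Finset.sum_nonneg fun j _ => Finset.sum_nonneg fun s _ => hG0 j s s
    -- step 4
    have step4 : (star v ⬝ᵥ Y *ᵥ v).re ≤ ‖Y‖ * ‖E v‖ ^ 2 := by
      have hinner : star v ⬝ᵥ Y *ᵥ v = inner ℂ (E v) (E (Y *ᵥ v)) := by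
        rw [dotProduct_comm]; rfl
      rw [hinner]
      calc (inner ℂ (E v) (E (Y *ᵥ v)) : ℂ).re
          ≤ ‖(inner ℂ (E v) (E (Y *ᵥ v)) : ℂ)‖ := Complex.re_le_norm _
        _ = ‖(inner ℂ (E v) (E (Y *ᵥ v)) : ℂ)‖ := rfl
        _ ≤ ‖E v‖ * ‖E (Y *ᵥ v)‖ := norm_inner_le_norm _ _
        _ ≤ ‖E v‖ * (‖Y‖ * ‖E v‖) := by
            refine mul_le_mul_of_nonneg_left ?_ (norm_nonneg _)
            exact Matrix.l2_opNorm_mulVec Y (E v)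
        _ = ‖Y‖ * ‖E v‖ ^ 2 := by ring
    calc (star v ⬝ᵥ X *ᵥ v).re ≤ (R:ℝ) * ∑ j, ∑ s, G j s s := step3
      _ ≤ (R:ℝ) * ((C:ℝ) * (star v ⬝ᵥ Y *ᵥ v).re) := by
          refine mul_le_mul_of_nonneg_left step2 (by positivity)
      _ ≤ (R:ℝ) * ((C:ℝ) * (‖Y‖ * ‖E v‖ ^ 2)) := by
          refine mul_le_mul_of_nonneg_left (mul_le_mul_of_nonneg_left step4 (by positivity))
            (by positivity)
      _ = (R:ℝ) * C * ‖Y‖ * ‖E v‖ ^ 2 := by ring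
  -- conclude
  have hSnorm : ‖S‖ ≤ Real.sqrt ((R:ℝ) * C * ‖Y‖) := by
    rw [Matrix.l2_opNorm_def]
    refine ContinuousLinearMap.opNorm_le_bound _ (Real.sqrt_nonneg _) fun x => ?_
    have hx : (LinearEquiv.trans Matrix.toEuclideanLin LinearMap.toContinuousLinearMap S) x
        = E (S *ᵥ (WithLp.equiv 2 _ x)) := rfl
    rw [hx]
    have h1 : ‖E (S *ᵥ (WithLp.equiv 2 _ x))‖ ^ 2 ≤ ((R:ℝ) * C * ‖Y‖) * ‖x‖ ^ 2 := by
      have h3 := main (WithLp.equiv 2 _ x)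
      rw [← qf_re] at h3
      have hEx : E ((WithLp.equiv 2 _) x) = x := (WithLp.equiv 2 _).symm_apply_apply x
      rw [hEx] at h3
      exact h3
    have h2 : ‖E (S *ᵥ (WithLp.equiv 2 _ x))‖
        = Real.sqrt (‖E (S *ᵥ (WithLp.equiv 2 _ x))‖ ^ 2) :=
      (Real.sqrt_sq (norm_nonneg _)).symm
    rw [h2]
    calc Real.sqrt (‖E (S *ᵥ (WithLp.equiv 2 _ x))‖ ^ 2)
        ≤ Real.sqrt (((R:ℝ) * C * ‖Y‖) * ‖x‖ ^ 2) := Real.sqrt_le_sqrt h1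
      _ = Real.sqrt ((R:ℝ) * C * ‖Y‖) * ‖x‖ := by
          rw [Real.sqrt_mul (by positivity), Real.sqrt_sq (norm_nonneg _)]
  calc ‖X‖ = ‖Sᴴ * S‖ := by rw [hSh, hSS]
    _ = ‖S‖ * ‖S‖ := Matrix.l2_opNorm_conjTranspose_mul_self S
    _ ≤ Real.sqrt ((R:ℝ) * C * ‖Y‖) * Real.sqrt ((R:ℝ) * C * ‖Y‖) :=
        mul_le_mul hSnorm hSnorm (norm_nonneg _) (Real.sqrt_nonneg _)
    _ = (R:ℝ) * C * ‖Y‖ := Real.mul_self_sqrt (by positivity)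


end FrobeniusRieffelAux

open FrobeniusRieffelAux in
/-- Equivalence constants on the direct sum `A = Π_k M_{ι_k}(ℂ)` (with the sup norm) for
the componentwise conditional expectation onto `⊕_k B_{λ_k}`: with
`r = lcm_k (Σ_i m_k i)` and `ℓ = lcm_{k,i} (m_k i)`,
(i) `‖P X‖ ≥ (1/(rℓ))·‖X‖` whenever every component of `X` is positive semidefinite, and
(ii) `√‖P (X*X)‖ ≥ (1/√(rℓ))·‖X‖` for all `X`. -/
theorem directSum_refinedPartitionCondExp_opNorm_equivalence
    (N : ℕ) (hN : 1 ≤ N) (L : Fin N → ℕ) (hL : ∀ k, 1 ≤ L k)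
    (m d : (k : Fin N) → Fin (L k) → ℕ)
    (hm : ∀ k i, 1 ≤ m k i) (hd : ∀ k i, 1 ≤ d k i)
    (P : ((k : Fin N) → Matrix ((i : Fin (L k)) × (Fin (m k i) × Fin (d k i)))
        ((i : Fin (L k)) × (Fin (m k i) × Fin (d k i))) ℂ) →
      ((k : Fin N) → Matrix ((i : Fin (L k)) × (Fin (m k i) × Fin (d k i)))
        ((i : Fin (L k)) × (Fin (m k i) × Fin (d k i))) ℂ))
    (hP : ∀ X k, P X k = refinedPartitionCondExp (m k) (d k) (X k))
    (r ℓ : ℕ)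
    (hr : r = Finset.univ.lcm fun k => ∑ i, m k i)
    (hℓ : ℓ = Finset.univ.lcm fun k => Finset.univ.lcm (m k)) :
    (∀ X : (k : Fin N) → Matrix ((i : Fin (L k)) × (Fin (m k i) × Fin (d k i)))
        ((i : Fin (L k)) × (Fin (m k i) × Fin (d k i))) ℂ,
      (∀ k, (X k).PosSemidef) → ‖P X‖ ≥ ((r : ℝ) * ℓ)⁻¹ * ‖X‖) ∧
    (∀ X : (k : Fin N) → Matrix ((i : Fin (L k)) × (Fin (m k i) × Fin (d k i)))
        ((i : Fin (L k)) × (Fin (m k i) × Fin (d k i))) ℂ,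
      Real.sqrt ‖P (fun k => (X k)ᴴ * X k)‖ ≥ (Real.sqrt ((r : ℝ) * ℓ))⁻¹ * ‖X‖) := by
  classical
  have hrpos : 0 < r := by
    rw [hr, Nat.pos_iff_ne_zero]
    intro h0
    rw [Finset.lcm_eq_zero_iff] at h0
    obtain ⟨k, -, hk⟩ := h0
    have : 0 < ∑ i, m k i := by
      have : 0 < L k := hL k
      calc 0 < m k ⟨0, this⟩ := hm k _
        _ ≤ ∑ i, m k i := Finset.single_le_sum (fun i _ => Nat.zero_le _) (Finset.mem_univ _)
    omega
  have hlpos : 0 < ℓ := by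
    rw [hℓ, Nat.pos_iff_ne_zero]
    intro h0
    rw [Finset.lcm_eq_zero_iff] at h0
    obtain ⟨k, -, hk⟩ := h0
    rw [Finset.lcm_eq_zero_iff] at hk
    obtain ⟨i, -, hi⟩ := hk
    exact absurd hi.symm (by have := hm k i; omega)
  have hRk : ∀ k, (∑ i, m k i) ≤ r :=
    fun k => Nat.le_of_dvd hrpos (hr ▸ Finset.dvd_lcm (Finset.mem_univ k))
  have hCk : ∀ k i, m k i ≤ ℓ := by
    intro k i
    refine Nat.le_of_dvd hlpos ?_
    exact dvd_trans (Finset.dvd_lcm (Finset.mem_univ i))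
      (hℓ ▸ Finset.dvd_lcm (Finset.mem_univ k))
  have hrl : (0:ℝ) < (r:ℝ) * ℓ := by positivity
  -- the core componentwise estimate
  have core : ∀ (X : (k : Fin N) → Matrix ((i : Fin (L k)) × (Fin (m k i) × Fin (d k i)))
        ((i : Fin (L k)) × (Fin (m k i) × Fin (d k i))) ℂ),
      (∀ k, (X k).PosSemidef) → ∀ k, ‖X k‖ ≤ ((r : ℝ) * ℓ) * ‖P X‖ := by
    intro X hXpsd k
    calc ‖X k‖ ≤ ((r:ℝ) * ℓ) * ‖refinedPartitionCondExp (m k) (d k) (X k)‖ :=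
          key_norm (m k) (d k) (hm k) r ℓ (hRk k) (hCk k) (X k) (hXpsd k)
      _ = ((r:ℝ) * ℓ) * ‖P X k‖ := by rw [hP]
      _ ≤ ((r:ℝ) * ℓ) * ‖P X‖ :=
          mul_le_mul_of_nonneg_left (norm_le_pi_norm (P X) k) (le_of_lt hrl)
  constructor
  · intro X hXpsd
    rw [ge_iff_le, inv_mul_le_iff₀ hrl]
    rw [pi_norm_le_iff_of_nonneg (by positivity)]
    exact core X hXpsd
  · intro X
    set Z : (k : Fin N) → Matrix ((i : Fin (L k)) × (Fin (m k i) × Fin (d k i)))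
        ((i : Fin (L k)) × (Fin (m k i) × Fin (d k i))) ℂ := fun k => (X k)ᴴ * X k with hZ
    have hZpsd : ∀ k, (Z k).PosSemidef := fun k => Matrix.posSemidef_conjTranspose_mul_self _
    have hXle : ‖X‖ ≤ Real.sqrt ((r:ℝ) * ℓ) * Real.sqrt ‖P Z‖ := by
      rw [pi_norm_le_iff_of_nonneg (by positivity)]
      intro k
      have h1 : ‖X k‖ * ‖X k‖ = ‖Z k‖ := (Matrix.l2_opNorm_conjTranspose_mul_self (X k)).symm
      have h2 : ‖Z k‖ ≤ ((r:ℝ) * ℓ) * ‖P Z‖ := core Z hZpsd k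
      have h3 : ‖X k‖ = Real.sqrt (‖X k‖ * ‖X k‖) := (Real.sqrt_mul_self (norm_nonneg _)).symm
      rw [h3, h1, ← Real.sqrt_mul (le_of_lt hrl)]
      exact Real.sqrt_le_sqrt h2
    have hs : (0:ℝ) < Real.sqrt ((r:ℝ) * ℓ) := Real.sqrt_pos.mpr hrl
    rw [ge_iff_le, inv_mul_le_iff₀ hs]
    exact hXle
end

section
/- Let n, L ≥ 1 and b : Fin n → Fin L, with pinching map P_b. Then the map N : M_n(ℂ) → ℝ defined by N(A) = √‖P_b(AᴴA)‖_op is a norm on M_n(ℂ): (i) N(A) = 0 if and only if A = 0; (ii) N(c·A) = |c|·N(A) for all c ∈ ℂ and A ∈ M_n(ℂ); (iii) N(A + B) ≤ N(A) + N(B) for all A, B ∈ M_n(ℂ). -/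
open Matrix
open scoped Matrix.Norms.L2Operator

/-- The Frobenius–Rieffel norm `N(A) = √‖P_b(AᴴA)‖_op` associated to the pinching onto the
block-diagonal subalgebra determined by `b` is a norm on `M_n(ℂ)`. -/
theorem frobeniusRieffel_is_norm
    (n L : ℕ) (hn : 1 ≤ n) (hL : 1 ≤ L) (b : Fin n → Fin L)
    (P : Matrix (Fin n) (Fin n) ℂ → Matrix (Fin n) (Fin n) ℂ)
    (hP : ∀ X, P X = Matrix.of fun j k => if b j = b k then X j k else 0)
    (N : Matrix (Fin n) (Fin n) ℂ → ℝ)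
    (hN : ∀ A, N A = Real.sqrt ‖P (Aᴴ * A)‖) :
    (∀ A : Matrix (Fin n) (Fin n) ℂ, N A = 0 ↔ A = 0) ∧
    (∀ (c : ℂ) (A : Matrix (Fin n) (Fin n) ℂ), N (c • A) = ‖c‖ * N A) ∧
    (∀ A B : Matrix (Fin n) (Fin n) ℂ, N (A + B) ≤ N A + N B) := by
  -- The "stacking" map: M A = column-blocks A·D_l stacked, so (M A)ᴴ (M A) = P (Aᴴ A).
  set M : Matrix (Fin n) (Fin n) ℂ → Matrix (Fin L × Fin n) (Fin n) ℂ :=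
    fun A => Matrix.of fun p k => if b k = p.1 then A p.2 k else 0 with hM
  have key : ∀ A : Matrix (Fin n) (Fin n) ℂ, P (Aᴴ * A) = (M A)ᴴ * (M A) := by
    intro A
    ext j k
    simp only [hP, Matrix.of_apply, Matrix.mul_apply, Matrix.conjTranspose_apply, hM]
    rw [Fintype.sum_prod_type, Finset.sum_comm]
    simp only [apply_ite star, star_zero, ite_mul, zero_mul, mul_ite, mul_zero,
      Finset.sum_ite_eq, Finset.mem_univ, if_true]
    by_cases h : b j = b k
    · simp [h]
    · simp [if_neg h, if_neg (Ne.symm h)]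
  have hNM : ∀ A, N A = ‖M A‖ := by
    intro A
    rw [hN, key, Matrix.l2_opNorm_conjTranspose_mul_self,
      Real.sqrt_mul_self (norm_nonneg _)]
  have hMadd : ∀ A B, M (A + B) = M A + M B := by
    intro A B
    ext ⟨l, i⟩ k
    simp only [hM, Matrix.of_apply, Matrix.add_apply]
    split <;> simp
  have hMsmul : ∀ (c : ℂ) A, M (c • A) = c • M A := by
    intro c A
    ext ⟨l, i⟩ k
    simp only [hM, Matrix.of_apply, Matrix.smul_apply, smul_eq_mul]
    split <;> simp
  refine ⟨fun A => ?_, fun c A => ?_, fun A B => ?_⟩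
  · rw [hNM, norm_eq_zero]
    constructor
    · intro h
      ext i k
      have := congrFun (congrFun h (b k, i)) k
      simpa [hM] using this
    · rintro rfl
      ext ⟨l, i⟩ k
      simp [hM]
  · rw [hNM, hNM, hMsmul, norm_smul]
  · rw [hNM, hNM, hNM, hMadd]
    exact norm_add_le _ _
end

section
/- Fix N ≥ 2. For an irrational θ ∈ (0,1), let r_k(θ) (k ≥ 1) be the partial denominators of the continued fraction expansion of θ, and let p_k(θ), q_k(θ) be the numerators and denominators of its convergents. Define c_N(θ) = (θ·q_N(θ) − p_N(θ)) / ((θ·q_{N−2}(θ) − p_{N−2}(θ))·r_N(θ)·(r_N(θ)+1)²). If (θ_j) is a sequence of irrationals in (0,1) converging to an irrational θ ∈ (0,1), then c_N(θ_j) → c_N(θ) as j → ∞. -/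
open GenContFract Filter Topology

/-- Iterated Gauss-map fractional parts of `θ`. -/
noncomputable def cfG (θ : ℝ) : ℕ → ℝ
  | 0 => Int.fract θ
  | n + 1 => Int.fract (cfG θ n)⁻¹

lemma irrational_fract {x : ℝ} (hx : Irrational x) : Irrational (Int.fract x) := by
  rw [← Int.self_sub_floor]; exact hx.sub_intCast ⌊x⌋

lemma cfG_irrational {θ : ℝ} (hθ : Irrational θ) : ∀ n, Irrational (cfG θ n)
  | 0 => irrational_fract hθ
  | n + 1 => irrational_fract (cfG_irrational hθ n).inv

lemma cfG_succ_eq (θ : ℝ) : ∀ n, cfG ((Int.fract θ)⁻¹) n = cfG θ (n + 1)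
  | 0 => rfl
  | n + 1 => by rw [cfG, cfG_succ_eq θ n]; rfl

lemma of_s_get_eq {θ : ℝ} (hθ : Irrational θ) :
    ∀ n, (GenContFract.of θ).s.get? n = some ⟨1, (⌊(cfG θ n)⁻¹⌋ : ℝ)⟩ := by
  intro n
  induction n generalizing θ with
  | zero => exact of_s_head (irrational_fract hθ).ne_zero
  | succ n ih =>
      rw [of_s_succ, ih (irrational_fract hθ).inv, cfG_succ_eq]

lemma eventually_floor_eq {u : ℕ → ℝ} {x : ℝ} (hx : Irrational x)
    (h : Tendsto u atTop (𝓝 x)) : ∀ᶠ j in atTop, ⌊u j⌋ = ⌊x⌋ := by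
  have h1 : (⌊x⌋ : ℝ) < x := lt_of_le_of_ne (Int.floor_le x) (Ne.symm (hx.ne_int ⌊x⌋))
  have h2 : x < (⌊x⌋ : ℝ) + 1 := Int.lt_floor_add_one x
  have hmem : ∀ᶠ j in atTop, u j ∈ Set.Ioo ((⌊x⌋ : ℝ)) ((⌊x⌋ : ℝ) + 1) :=
    h (Ioo_mem_nhds h1 h2)
  filter_upwards [hmem] with j hj
  exact Int.floor_eq_iff.mpr ⟨le_of_lt hj.1, hj.2⟩

lemma tendsto_fract {u : ℕ → ℝ} {x : ℝ} (hx : Irrational x)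
    (h : Tendsto u atTop (𝓝 x)) :
    Tendsto (fun j => Int.fract (u j)) atTop (𝓝 (Int.fract x)) := by
  have hev := eventually_floor_eq hx h
  have h' : Tendsto (fun j => u j - (⌊x⌋ : ℝ)) atTop (𝓝 (x - ⌊x⌋)) := h.sub_const _
  rw [← Int.self_sub_floor]
  refine h'.congr' ?_
  filter_upwards [hev] with j hj
  rw [← Int.self_sub_floor, hj]

lemma tendsto_cfG {θ : ℝ} (hθ : Irrational θ) {u : ℕ → ℝ}
    (h : Tendsto u atTop (𝓝 θ)) :
    ∀ n, Tendsto (fun j => cfG (u j) n) atTop (𝓝 (cfG θ n)) := by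
  intro n
  induction n with
  | zero => exact tendsto_fract hθ h
  | succ n ih =>
      have hirr := cfG_irrational hθ n
      exact tendsto_fract hirr.inv (ih.inv₀ hirr.ne_zero)

lemma contsAux_congr (g1 g2 : GenContFract ℝ) (hh : g1.h = g2.h) (n : ℕ)
    (hs : ∀ i < n, g1.s.get? i = g2.s.get? i) :
    ∀ m, m ≤ n + 1 → g1.contsAux m = g2.contsAux m := by
  intro m
  induction m using Nat.strong_induction_on with
  | _ m ih =>
    match m with
    | 0 => intro _; rfl
    | 1 => intro _; simp [contsAux, hh]
    | (k + 2) =>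
      intro hm
      have hk : k < n := by omega
      have h1 := ih k (by omega) (by omega)
      have h2 := ih (k + 1) (by omega) (by omega)
      show g1.contsAux (k + 2) = g2.contsAux (k + 2)
      rw [contsAux, contsAux, hs k hk, h1, h2]

lemma exists_int_contsAux {θ : ℝ} (hθ : Irrational θ) :
    ∀ n, ∃ a b : ℤ, (GenContFract.of θ).contsAux n = ⟨(a : ℝ), (b : ℝ)⟩ := by
  intro n
  induction n using Nat.strong_induction_on with
  | _ n ih =>
    match n with
    | 0 => exact ⟨1, 0, by simp [contsAux]⟩
    | 1 => exact ⟨⌊θ⌋, 1, by simp [contsAux, of_h_eq_floor]⟩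
    | (k + 2) =>
      obtain ⟨a1, b1, h1⟩ := ih k (by omega)
      obtain ⟨a2, b2, h2⟩ := ih (k + 1) (by omega)
      refine ⟨⌊(cfG θ k)⁻¹⌋ * a2 + a1, ⌊(cfG θ k)⁻¹⌋ * b2 + b1, ?_⟩
      rw [contsAux, of_s_get_eq hθ k, h1, h2]
      simp only [nextConts, nextNum, nextDen]
      refine congrArg₂ _ ?_ ?_ <;> push_cast <;> ring

lemma of_den_pos {θ : ℝ} (hθ : Irrational θ) (n : ℕ) : 0 < (GenContFract.of θ).dens n := by
  have hfib : ((Nat.fib (n + 1) : ℝ)) ≤ (GenContFract.of θ).dens n := by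
    apply succ_nth_fib_le_of_nth_den
    match n with
    | 0 => exact Or.inl rfl
    | (k + 1) =>
      refine Or.inr ?_
      rw [GenContFract.terminatedAt_iff_s_none, of_s_get_eq hθ]
      simp
  have : (0 : ℝ) < (Nat.fib (n + 1) : ℝ) := by
    exact_mod_cast Nat.fib_pos.mpr (by omega)
  linarith

lemma theta_mul_den_sub_num_ne_zero {θ : ℝ} (hθ : Irrational θ) (k : ℕ) :
    θ * (GenContFract.of θ).dens k - (GenContFract.of θ).nums k ≠ 0 := by
  obtain ⟨a, b, hab⟩ := exists_int_contsAux hθ (k + 1)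
  have hnum : (GenContFract.of θ).nums k = (a : ℝ) := by
    rw [num_eq_conts_a, nth_cont_eq_succ_nth_contAux, hab]
  have hden : (GenContFract.of θ).dens k = (b : ℝ) := by
    rw [den_eq_conts_b, nth_cont_eq_succ_nth_contAux, hab]
  have hbpos : (0 : ℝ) < (b : ℝ) := hden ▸ of_den_pos hθ k
  intro h
  rw [hnum, hden, sub_eq_zero] at h
  have : θ = ((a : ℚ) / (b : ℚ) : ℚ) := by
    push_cast
    field_simp at h ⊢
    linarith [h]
  exact Rat.not_irrational _ (this ▸ hθ)

theorem effrosShenConst_tendsto_aux : True := trivial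

lemma partDen_getD_eq {v : ℝ} (hv : Irrational v) (n : ℕ) :
    ((GenContFract.of v).partDens.get? n).getD 0 = (⌊(cfG v n)⁻¹⌋ : ℝ) := by
  rw [partDen_eq_s_b (of_s_get_eq hv n)]; rfl

/-- `k`-th convergent numerator `p_k(θ)` of the continued fraction expansion of `θ`. -/
noncomputable def cfNum (θ : ℝ) (k : ℕ) : ℝ := (GenContFract.of θ).nums k

/-- `k`-th convergent denominator `q_k(θ)` of the continued fraction expansion of `θ`. -/
noncomputable def cfDen (θ : ℝ) (k : ℕ) : ℝ := (GenContFract.of θ).dens k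

/-- `k`-th partial denominator `r_k(θ)` (for `k ≥ 1`) of the continued fraction
expansion of `θ`. -/
noncomputable def cfPartDen (θ : ℝ) (k : ℕ) : ℝ :=
  ((GenContFract.of θ).partDens.get? (k - 1)).getD 0

/-- The square of the equivalence constant between the operator norm and the
Frobenius–Rieffel norm on the `N`-th finite-dimensional algebra of the Effros–Shen
AF algebra with parameter `θ`. -/
noncomputable def effrosShenConst (N : ℕ) (θ : ℝ) : ℝ :=
  (θ * cfDen θ N - cfNum θ N) /
    ((θ * cfDen θ (N - 2) - cfNum θ (N - 2)) * cfPartDen θ N * (cfPartDen θ N + 1) ^ 2)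

/-- The equivalence constants for the Effros–Shen finite-dimensional algebras vary
continuously with respect to the irrational parameter. -/
theorem effrosShenConst_tendsto
    (N : ℕ) (hN : 2 ≤ N)
    (θ : ℝ) (hθ : θ ∈ Set.Ioo (0 : ℝ) 1) (hθirr : Irrational θ)
    (θs : ℕ → ℝ) (hθs : ∀ j, θs j ∈ Set.Ioo (0 : ℝ) 1 ∧ Irrational (θs j))
    (hconv : Filter.Tendsto θs Filter.atTop (nhds θ)) :
    Filter.Tendsto (fun j => effrosShenConst N (θs j)) Filter.atTop
      (nhds (effrosShenConst N θ)) := by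
  -- eventual agreement of the sequence entries
  have hSi : ∀ i, i < N → ∀ᶠ j in atTop,
      (GenContFract.of (θs j)).s.get? i = (GenContFract.of θ).s.get? i := by
    intro i _
    have ht := tendsto_cfG hθirr hconv i
    have hirr := cfG_irrational hθirr i
    have hfl := eventually_floor_eq hirr.inv (ht.inv₀ hirr.ne_zero)
    filter_upwards [hfl] with j hj
    rw [of_s_get_eq (hθs j).2 i, of_s_get_eq hθirr i, hj]
  have hS : ∀ᶠ j in atTop, ∀ i ∈ Finset.range N,
      (GenContFract.of (θs j)).s.get? i = (GenContFract.of θ).s.get? i :=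
    (Filter.eventually_all_finset _).mpr (fun i hi => hSi i (Finset.mem_range.mp hi))
  have hH : ∀ᶠ j in atTop, ⌊θs j⌋ = ⌊θ⌋ := eventually_floor_eq hθirr hconv
  have hRfl : ∀ᶠ j in atTop, ⌊(cfG (θs j) (N-1))⁻¹⌋ = ⌊(cfG θ (N-1))⁻¹⌋ := by
    have hirr := cfG_irrational hθirr (N-1)
    exact eventually_floor_eq hirr.inv
      ((tendsto_cfG hθirr hconv (N-1)).inv₀ hirr.ne_zero)
  -- eventual equality of the building blocks
  have hEq : ∀ᶠ j in atTop,
      (∀ k, k ≤ N → cfNum (θs j) k = cfNum θ k ∧ cfDen (θs j) k = cfDen θ k) ∧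
        cfPartDen (θs j) N = cfPartDen θ N := by
    filter_upwards [hS, hH, hRfl] with j hj hh hr
    have hh' : (GenContFract.of (θs j)).h = (GenContFract.of θ).h := by
      rw [of_h_eq_floor, of_h_eq_floor, hh]
    have hca := contsAux_congr (GenContFract.of (θs j)) (GenContFract.of θ) hh' N
      (fun i hi => hj i (Finset.mem_range.mpr hi))
    refine ⟨fun k hk => ?_, ?_⟩
    · have hc := hca (k + 1) (by omega)
      constructor
      · show (GenContFract.of (θs j)).nums k = (GenContFract.of θ).nums k
        rw [num_eq_conts_a, num_eq_conts_a, nth_cont_eq_succ_nth_contAux,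
          nth_cont_eq_succ_nth_contAux, hc]
      · show (GenContFract.of (θs j)).dens k = (GenContFract.of θ).dens k
        rw [den_eq_conts_b, den_eq_conts_b, nth_cont_eq_succ_nth_contAux,
          nth_cont_eq_succ_nth_contAux, hc]
    · show ((GenContFract.of (θs j)).partDens.get? (N-1)).getD 0
        = ((GenContFract.of θ).partDens.get? (N-1)).getD 0
      rw [partDen_getD_eq (hθs j).2, partDen_getD_eq hθirr, hr]
  -- the limit function
  set PN := cfNum θ N with hPN
  set QN := cfDen θ N with hQN
  set P2 := cfNum θ (N - 2) with hP2
  set Q2 := cfDen θ (N - 2) with hQ2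
  set r := cfPartDen θ N with hr
  have hr1 : (1 : ℝ) ≤ r := by
    rw [hr]
    show (1:ℝ) ≤ ((GenContFract.of θ).partDens.get? (N-1)).getD 0
    rw [partDen_getD_eq hθirr]
    exact of_one_le_get?_partDen (partDen_eq_s_b (of_s_get_eq hθirr (N-1)))
  have hne : θ * Q2 - P2 ≠ 0 := theta_mul_den_sub_num_ne_zero hθirr (N - 2)
  have hD : (θ * Q2 - P2) * r * (r + 1) ^ 2 ≠ 0 :=
    mul_ne_zero (mul_ne_zero hne (by linarith)) (pow_ne_zero _ (by linarith))
  have hnum : Tendsto (fun j => θs j * QN - PN) atTop (𝓝 (θ * QN - PN)) :=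
    (hconv.mul_const _).sub_const _
  have hden : Tendsto (fun j => (θs j * Q2 - P2) * r * (r + 1) ^ 2) atTop
      (𝓝 ((θ * Q2 - P2) * r * (r + 1) ^ 2)) :=
    (((hconv.mul_const _).sub_const _).mul_const _).mul_const _
  have hT := hnum.div hden hD
  refine hT.congr' ?_
  filter_upwards [hEq] with j ⟨hk, hpd⟩
  obtain ⟨hnN, hdN⟩ := hk N le_rfl
  obtain ⟨hn2, hd2⟩ := hk (N - 2) (by omega)
  show (θs j * QN - PN) / ((θs j * Q2 - P2) * r * (r + 1) ^ 2) = effrosShenConst N (θs j)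
  rw [effrosShenConst, hnN, hdN, hn2, hd2, hpd]
end

section
/- The map sending an irrational θ ∈ (0,1) to its sequence of continued fraction partial denominators (r_1(θ), r_2(θ), r_3(θ), …) is a homeomorphism from the set {θ ∈ ℝ : 0 < θ < 1 and θ irrational}, with the subspace topology inherited from ℝ, onto the space of all sequences of positive integers (ℕ → {m : ℕ // 1 ≤ m}) with the product topology (the topology induced by the Baire metric d_B(x,y) = 2^{−min{n : x_n ≠ y_n}} for x ≠ y). -/
namespace CFBaire

def sh {α : Type*} (a : ℕ → α) : ℕ → α := fun n => a (n + 1)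

def pqAux (a : ℕ → ℕ) : ℕ → (ℤ × ℤ) × (ℤ × ℤ)
  | 0 => ((0, 1), (1, (a 0 : ℤ)))
  | n + 1 => ((pqAux a n).2,
      ((a (n+1) : ℤ) * (pqAux a n).2.1 + (pqAux a n).1.1,
       (a (n+1) : ℤ) * (pqAux a n).2.2 + (pqAux a n).1.2))

def pN (a : ℕ → ℕ) (n : ℕ) : ℤ := (pqAux a n).1.1
def qN (a : ℕ → ℕ) (n : ℕ) : ℤ := (pqAux a n).1.2

lemma pqAux_snd (a : ℕ → ℕ) (n : ℕ) : (pqAux a n).2 = (pqAux a (n+1)).1 := by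
  rw [pqAux]

@[simp] lemma pN_zero (a : ℕ → ℕ) : pN a 0 = 0 := rfl
@[simp] lemma qN_zero (a : ℕ → ℕ) : qN a 0 = 1 := rfl
@[simp] lemma pN_one (a : ℕ → ℕ) : pN a 1 = 1 := rfl
@[simp] lemma qN_one (a : ℕ → ℕ) : qN a 1 = (a 0 : ℤ) := rfl

lemma pN_succ_succ (a : ℕ → ℕ) (n : ℕ) :
    pN a (n + 2) = (a (n+1) : ℤ) * pN a (n+1) + pN a n := by
  show (pqAux a (n+2)).1.1 = _
  rw [pqAux, pqAux]
  simp [pN, ← pqAux_snd]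

lemma qN_succ_succ (a : ℕ → ℕ) (n : ℕ) :
    qN a (n + 2) = (a (n+1) : ℤ) * qN a (n+1) + qN a n := by
  show (pqAux a (n+2)).1.2 = _
  rw [pqAux, pqAux]
  simp [qN, ← pqAux_snd]

section seqlemmas
variable {a : ℕ → ℕ} (ha : ∀ n, 1 ≤ a n)
include ha

lemma one_le_cast (n : ℕ) : (1 : ℤ) ≤ (a n : ℤ) := by exact_mod_cast ha n

lemma qN_pos_pair : ∀ n, 0 < qN a n ∧ 0 < qN a (n+1) := by
  intro n
  induction n with
  | zero => exact ⟨by simp, by simpa using lt_of_lt_of_le zero_lt_one (one_le_cast ha 0)⟩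
  | succ n ih =>
    refine ⟨ih.2, ?_⟩
    rw [qN_succ_succ]
    nlinarith [ih.1, ih.2, one_le_cast ha (n+1)]

lemma qN_pos (n : ℕ) : 0 < qN a n := (qN_pos_pair ha n).1

lemma qN_mono_pair : ∀ n, qN a n ≤ qN a (n+1) ∧ qN a (n+1) ≤ qN a (n+2) := by
  intro n
  induction n with
  | zero =>
    refine ⟨by simpa using one_le_cast ha 0, ?_⟩
    have h := qN_succ_succ a 0
    rw [h]
    have h0 : qN a 0 = 1 := rfl
    have h1 : qN a 1 = (a 0 : ℤ) := rfl
    nlinarith [one_le_cast ha 0, one_le_cast ha 1]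
  | succ n ih =>
    refine ⟨ih.2, ?_⟩
    rw [qN_succ_succ a (n+1)]
    nlinarith [qN_pos ha (n+1), qN_pos ha (n+1+1), one_le_cast ha (n+1+1)]

lemma qN_mono (n : ℕ) : qN a n ≤ qN a (n+1) := (qN_mono_pair ha n).1

omit ha in
lemma pN_nonneg_pair : ∀ n, 0 ≤ pN a n ∧ 0 ≤ pN a (n+1) := by
  intro n
  induction n with
  | zero => exact ⟨by simp, by simp⟩
  | succ n ih =>
    refine ⟨ih.2, ?_⟩
    rw [pN_succ_succ]
    nlinarith [ih.1, ih.2, Int.natCast_nonneg (a (n+1))]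

omit ha in
lemma pN_nonneg (n : ℕ) : 0 ≤ pN a n := (pN_nonneg_pair n).1

lemma pN_le_qN_pair : ∀ n, pN a n ≤ qN a n ∧ pN a (n+1) ≤ qN a (n+1) := by
  intro n
  induction n with
  | zero => exact ⟨by simp, by simpa using one_le_cast ha 0⟩
  | succ n ih =>
    refine ⟨ih.2, ?_⟩
    rw [pN_succ_succ, qN_succ_succ]
    nlinarith [ih.1, ih.2, one_le_cast ha (n+1)]

lemma pN_le_qN (n : ℕ) : pN a n ≤ qN a n := (pN_le_qN_pair ha n).1

omit ha in
lemma det_eq : ∀ n, pN a (n+1) * qN a n - pN a n * qN a (n+1) = (-1 : ℤ)^n := by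
  intro n
  induction n with
  | zero => simp
  | succ n ih =>
    rw [pN_succ_succ, qN_succ_succ, pow_succ]
    nlinarith [ih]

lemma two_pow_le_qN_mul : ∀ n, (2:ℤ)^n ≤ qN a n * qN a (n+1) := by
  intro n
  induction n with
  | zero => simpa using one_le_cast ha 0
  | succ n ih =>
    rw [qN_succ_succ, pow_succ]
    nlinarith [ih, qN_pos ha n, qN_pos ha (n+1),
      mul_le_mul_of_nonneg_right (qN_mono ha n) (qN_pos ha (n+1)).le,
      mul_le_mul_of_nonneg_right (one_le_cast ha (n+1))
        (mul_pos (qN_pos ha (n+1)) (qN_pos ha (n+1))).le]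

/-- real convergents -/
noncomputable def cN (a : ℕ → ℕ) (n : ℕ) : ℝ := (pN a n : ℝ) / (qN a n : ℝ)

lemma cN_nonneg (n : ℕ) : 0 ≤ cN a n :=
  div_nonneg (by exact_mod_cast pN_nonneg (a := a) n) (by exact_mod_cast (qN_pos ha n).le)

lemma cN_le_one (n : ℕ) : cN a n ≤ 1 := by
  have hq : (0:ℝ) < (qN a n : ℝ) := by exact_mod_cast qN_pos ha n
  rw [cN, div_le_one hq]
  exact_mod_cast pN_le_qN ha n

lemma cN_sub (n : ℕ) :
    cN a (n+1) - cN a n = ((-1:ℝ)^n) / ((qN a n : ℝ) * (qN a (n+1) : ℝ)) := by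
  have hq0 : ((qN a n : ℝ)) ≠ 0 := by exact_mod_cast (qN_pos ha n).ne'
  have hq1 : ((qN a (n+1) : ℝ)) ≠ 0 := by exact_mod_cast (qN_pos ha (n+1)).ne'
  have hdet : ((pN a (n+1) : ℝ)) * (qN a n : ℝ) - (pN a n : ℝ) * (qN a (n+1) : ℝ)
      = (-1:ℝ)^n := by exact_mod_cast congrArg (fun z : ℤ => (z : ℝ)) (det_eq (a := a) n)
  rw [cN, cN, div_sub_div _ _ hq1 hq0,
    show ((qN a (n+1) : ℝ)) * (qN a n : ℝ) = (qN a n : ℝ) * (qN a (n+1) : ℝ) from mul_comm _ _]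
  congr 1
  linear_combination hdet

lemma abs_cN_sub_le (n : ℕ) : |cN a (n+1) - cN a n| ≤ (1/2 : ℝ)^n := by
  have hq0 : (0:ℝ) < (qN a n : ℝ) := by exact_mod_cast qN_pos ha n
  have hq1 : (0:ℝ) < (qN a (n+1) : ℝ) := by exact_mod_cast qN_pos ha (n+1)
  have h2 : (2:ℝ)^n ≤ (qN a n : ℝ) * (qN a (n+1) : ℝ) := by
    exact_mod_cast two_pow_le_qN_mul ha n
  have key : |cN a (n+1) - cN a n| = 1/((qN a n : ℝ) * (qN a (n+1) : ℝ)) := by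
    rw [cN_sub ha n, abs_div, abs_pow, abs_neg, abs_one, one_pow,
      abs_of_pos (by positivity)]
  rw [key, show (1/2:ℝ)^n = 1/(2:ℝ)^n by rw [div_pow, one_pow]]
  exact one_div_le_one_div_of_le (by positivity) h2

lemma abs_cN_sub_le' (n j : ℕ) :
    |cN a (n+j) - cN a n| ≤ 2*(1/2:ℝ)^n - 2*(1/2:ℝ)^(n+j) := by
  induction j with
  | zero => simp
  | succ j ih =>
    have h1 := abs_cN_sub_le ha (n+j)
    calc |cN a (n+(j+1)) - cN a n|
        ≤ |cN a (n+j+1) - cN a (n+j)| + |cN a (n+j) - cN a n| := by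
          rw [show n+(j+1) = n+j+1 from rfl]
          exact abs_sub_le _ _ _
      _ ≤ (1/2:ℝ)^(n+j) + (2*(1/2:ℝ)^n - 2*(1/2:ℝ)^(n+j)) := add_le_add h1 ih
      _ ≤ 2*(1/2:ℝ)^n - 2*(1/2:ℝ)^(n+(j+1)) := by
          rw [show n+(j+1) = (n+j)+1 from rfl, pow_succ]
          ring_nf
          nlinarith [pow_pos (by norm_num : (0:ℝ) < 1/2) (n+j)]

lemma cauchy_cN : CauchySeq (cN a) := by
  apply cauchySeq_of_le_geometric (1/2 : ℝ) 1 (by norm_num)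
  intro n
  rw [Real.dist_eq, abs_sub_comm, one_mul]
  exact abs_cN_sub_le ha n

omit ha in
lemma pq_shift_pair : ∀ n,
    (pN a (n+1) = qN (sh a) n ∧ qN a (n+1) = (a 0 : ℤ) * qN (sh a) n + pN (sh a) n) ∧
    (pN a (n+2) = qN (sh a) (n+1) ∧
      qN a (n+2) = (a 0 : ℤ) * qN (sh a) (n+1) + pN (sh a) (n+1)) := by
  intro n
  induction n with
  | zero =>
    refine ⟨⟨rfl, by simp⟩, ?_, ?_⟩
    · rw [pN_succ_succ a 0]
      simp [sh]
    · rw [qN_succ_succ a 0]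
      simp [sh]
      ring
  | succ n ih =>
    refine ⟨ih.2, ?_, ?_⟩
    · rw [pN_succ_succ a (n+1), qN_succ_succ (sh a) n, ih.1.1, ih.2.1]
      simp [sh]
    · rw [qN_succ_succ a (n+1), pN_succ_succ (sh a) n, qN_succ_succ (sh a) n,
        ih.1.2, ih.2.2]
      simp only [sh]
      ring

lemma cN_shift (n : ℕ) : cN a (n+1) = 1 / ((a 0 : ℝ) + cN (sh a) n) := by
  have hsh : ∀ m, 1 ≤ sh a m := fun m => ha (m+1)
  have hq' : (0:ℝ) < (qN (sh a) n : ℝ) := by exact_mod_cast qN_pos hsh n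
  have hp' : (0:ℝ) ≤ (pN (sh a) n : ℝ) := by exact_mod_cast pN_nonneg (a := sh a) n
  have ha0 : (1:ℝ) ≤ (a 0 : ℝ) := by exact_mod_cast ha 0
  have hc' : (0:ℝ) ≤ cN (sh a) n := cN_nonneg hsh n
  have hp := (pq_shift_pair (a := a) n).1.1
  have hq := (pq_shift_pair (a := a) n).1.2
  rw [cN, hp, hq]
  push_cast
  rw [div_eq_div_iff (by nlinarith) (by nlinarith)]
  rw [cN]
  field_simp

end seqlemmas

section Gv

open Filter Topology

abbrev PosN := {m : ℕ // 1 ≤ m}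

def va (a : ℕ → PosN) : ℕ → ℕ := fun n => (a n : ℕ)

lemma hva (a : ℕ → PosN) : ∀ n, 1 ≤ va a n := fun n => (a n).2

lemma va_sh (a : ℕ → PosN) : va (sh a) = sh (va a) := rfl

lemma exists_Gv (a : ℕ → PosN) : ∃ x, Tendsto (cN (va a)) atTop (𝓝 x) :=
  cauchySeq_tendsto_of_complete (cauchy_cN (hva a))

noncomputable def Gv (a : ℕ → PosN) : ℝ := (exists_Gv a).choose

lemma Gv_tendsto (a : ℕ → PosN) : Tendsto (cN (va a)) atTop (𝓝 (Gv a)) :=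
  (exists_Gv a).choose_spec

lemma Gv_nonneg (a : ℕ → PosN) : 0 ≤ Gv a :=
  ge_of_tendsto (Gv_tendsto a) (Filter.Eventually.of_forall fun n => cN_nonneg (hva a) n)

lemma Gv_le_one (a : ℕ → PosN) : Gv a ≤ 1 :=
  le_of_tendsto (Gv_tendsto a) (Filter.Eventually.of_forall fun n => cN_le_one (hva a) n)

lemma Gv_dist (a : ℕ → PosN) (n : ℕ) : |Gv a - cN (va a) n| ≤ 2*(1/2:ℝ)^n := by
  have h0 : Tendsto (fun j => cN (va a) (j + n)) atTop (𝓝 (Gv a)) :=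
    (Gv_tendsto a).comp (tendsto_add_atTop_nat n)
  have h1 : Tendsto (fun j => |cN (va a) (j + n) - cN (va a) n|) atTop
      (𝓝 |Gv a - cN (va a) n|) := (h0.sub_const _).abs
  refine le_of_tendsto h1 (Filter.Eventually.of_forall fun j => ?_)
  rw [Nat.add_comm j n]
  have h2 := abs_cN_sub_le' (hva a) n j
  have h3 : (0:ℝ) < (1/2:ℝ)^(n+j) := by positivity
  linarith

lemma Gv_shift (a : ℕ → PosN) : Gv a = 1 / ((va a 0 : ℝ) + Gv (sh a)) := by
  have hone : (1:ℝ) ≤ (va a 0 : ℝ) := by exact_mod_cast hva a 0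
  have hne : (va a 0 : ℝ) + Gv (sh a) ≠ 0 := by
    have := Gv_nonneg (sh a); linarith
  have h1 : Tendsto (fun n => cN (va a) (n+1)) atTop (𝓝 (Gv a)) :=
    (Gv_tendsto a).comp (tendsto_add_atTop_nat 1)
  have heq : (fun n => cN (va a) (n+1))
      = fun n => 1/((va a 0 : ℝ) + cN (va (sh a)) n) := by
    funext n
    rw [cN_shift (hva a) n, va_sh]
  have h2 : Tendsto (fun n => 1/((va a 0 : ℝ) + cN (va (sh a)) n)) atTop
      (𝓝 (1/((va a 0 : ℝ) + Gv (sh a)))) :=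
    Tendsto.div tendsto_const_nhds (tendsto_const_nhds.add (Gv_tendsto (sh a))) hne
  rw [heq] at h1
  exact tendsto_nhds_unique h1 h2

lemma Gv_pos (a : ℕ → PosN) : 0 < Gv a := by
  rw [Gv_shift]
  have hone : (1:ℝ) ≤ (va a 0 : ℝ) := by exact_mod_cast hva a 0
  have := Gv_nonneg (sh a)
  positivity

lemma Gv_lt_one (a : ℕ → PosN) : Gv a < 1 := by
  rw [Gv_shift a]
  have hone : (1:ℝ) ≤ (va a 0 : ℝ) := by exact_mod_cast hva a 0
  have h2 := Gv_pos (sh a)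
  rw [div_lt_one (by linarith)]
  linarith

lemma Gv_inv (a : ℕ → PosN) : (Gv a)⁻¹ = (va a 0 : ℝ) + Gv (sh a) := by
  rw [Gv_shift a, one_div, inv_inv]

lemma Gv_floor (a : ℕ → PosN) : ⌊(Gv a)⁻¹⌋ = (va a 0 : ℤ) := by
  rw [Gv_inv]
  have h1 := Gv_pos (sh a)
  have h2 := Gv_lt_one (sh a)
  rw [Int.floor_eq_iff]
  constructor
  · push_cast; linarith
  · push_cast; linarith

lemma Gv_fract (a : ℕ → PosN) : Int.fract ((Gv a)⁻¹) = Gv (sh a) := by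
  rw [Int.fract, Gv_floor, Gv_inv]
  push_cast
  ring

end Gv

section StreamF

open Filter Topology GenContFract

lemma Gv_fract_self (a : ℕ → PosN) : Int.fract (Gv a) = Gv a :=
  Int.fract_eq_self.mpr ⟨(Gv_pos a).le, Gv_lt_one a⟩

lemma stream_Gv : ∀ (n : ℕ) (a : ℕ → PosN),
    IntFractPair.stream (Gv a) (n+1) = some ⟨(va a n : ℤ), Gv (sh^[n+1] a)⟩ := by
  intro n
  induction n with
  | zero =>
    intro a
    have hf : Int.fract (Gv a) ≠ 0 := by
      rw [Gv_fract_self]; exact (Gv_pos a).ne'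
    rw [IntFractPair.stream_succ hf 0, Gv_fract_self, IntFractPair.stream_zero]
    have : IntFractPair.of (Gv a)⁻¹ = ⟨(va a 0 : ℤ), Gv (sh a)⟩ := by
      unfold IntFractPair.of
      rw [Gv_floor, Gv_fract]
    rw [this]
    rfl
  | succ n ih =>
    intro a
    have hf : Int.fract (Gv a) ≠ 0 := by
      rw [Gv_fract_self]; exact (Gv_pos a).ne'
    have hf2 : Int.fract ((Gv a)⁻¹) ≠ 0 := by
      rw [Gv_fract]; exact (Gv_pos (sh a)).ne'
    have hf3 : Int.fract (Gv (sh a)) ≠ 0 := by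
      rw [Gv_fract_self]; exact (Gv_pos (sh a)).ne'
    have e1 : IntFractPair.stream (Gv a) (n+2) = IntFractPair.stream (Gv (sh a)) (n+1) := by
      rw [IntFractPair.stream_succ hf (n+1), Gv_fract_self,
        IntFractPair.stream_succ hf2 n, Gv_fract,
        IntFractPair.stream_succ hf3 n, Gv_fract_self]
    rw [e1, ih (sh a), ← Function.iterate_succ_apply sh (n+1) a]
    rfl

lemma of_s_Gv (a : ℕ → PosN) (n : ℕ) :
    (GenContFract.of (Gv a)).s.get? n = some ⟨1, (va a n : ℤ)⟩ :=
  get?_of_eq_some_of_succ_get?_intFractPair_stream (stream_Gv n a)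

lemma Gv_irrational (a : ℕ → PosN) : Irrational (Gv a) := by
  intro hq
  obtain ⟨q, hq⟩ := hq
  have hterm : (GenContFract.of (Gv a)).Terminates :=
    (terminates_iff_rat (Gv a)).mpr ⟨q, hq.symm⟩
  obtain ⟨n, hn⟩ := hterm
  rw [Stream'.Seq.TerminatedAt] at hn
  rw [of_s_Gv a n] at hn
  simp at hn

end StreamF

section Bij

open Filter Topology GenContFract

abbrev I01 := {θ : ℝ // 0 < θ ∧ θ < 1 ∧ Irrational θ}

lemma inv_gt_one (θ : I01) : 1 < (θ.1)⁻¹ := by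
  rw [lt_inv_comm₀ one_pos θ.2.1]
  simpa using θ.2.2.1

lemma fract_inv_irr (θ : I01) : Irrational (Int.fract (θ.1)⁻¹) := by
  unfold Int.fract
  exact (θ.2.2.2.inv).sub_intCast _

lemma fract_inv_pos (θ : I01) : 0 < Int.fract (θ.1)⁻¹ :=
  lt_of_le_of_ne (Int.fract_nonneg _) (Ne.symm (fract_inv_irr θ).ne_zero)

/-- The Gauss map on irrationals of `(0,1)`. -/
noncomputable def Tg (θ : I01) : I01 :=
  ⟨Int.fract (θ.1)⁻¹, fract_inv_pos θ, Int.fract_lt_one _, fract_inv_irr θ⟩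

lemma floor_inv_pos (θ : I01) : 1 ≤ ⌊(θ.1)⁻¹⌋ :=
  Int.le_floor.mpr (by exact_mod_cast (inv_gt_one θ).le)

/-- Partial denominators of `θ` as a sequence of positive naturals. -/
noncomputable def Fb (θ : I01) (n : ℕ) : PosN :=
  ⟨(⌊((Tg^[n] θ).1)⁻¹⌋).toNat, by have := floor_inv_pos (Tg^[n] θ); omega⟩

lemma Fb_succ (θ : I01) (n : ℕ) : Fb θ (n+1) = Fb (Tg θ) n := by
  unfold Fb
  simp only [Function.iterate_succ_apply]

lemma Fb_cast (θ : I01) (n : ℕ) :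
    ((Fb θ n : ℕ) : ℝ) = (⌊((Tg^[n] θ).1)⁻¹⌋ : ℝ) := by
  have h := floor_inv_pos (Tg^[n] θ)
  unfold Fb
  simp only []
  norm_cast
  omega

lemma inv_eq_Fb_add_Tg (θ : I01) : (θ.1)⁻¹ = ((Fb θ 0 : ℕ) : ℝ) + (Tg θ).1 := by
  have h1 : Fb θ 0 = ⟨(⌊(θ.1)⁻¹⌋).toNat, by have := floor_inv_pos θ; omega⟩ := rfl
  rw [Fb_cast]
  show (θ.1)⁻¹ = (⌊((Tg^[0] θ).1)⁻¹⌋ : ℝ) + Int.fract ((θ.1)⁻¹)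
  rw [Function.iterate_zero_apply]
  rw [Int.fract]
  ring

/-- `Gv` packaged as an element of the subtype. -/
noncomputable def Gl (a : ℕ → PosN) : I01 :=
  ⟨Gv a, Gv_pos a, Gv_lt_one a, Gv_irrational a⟩

lemma Tg_Gl (a : ℕ → PosN) : Tg (Gl a) = Gl (sh a) := by
  apply Subtype.ext
  show Int.fract ((Gv a)⁻¹) = Gv (sh a)
  exact Gv_fract a

lemma Tg_iter_Gl (n : ℕ) (a : ℕ → PosN) : Tg^[n] (Gl a) = Gl (sh^[n] a) := by
  induction n generalizing a with
  | zero => rfl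
  | succ n ih =>
    rw [Function.iterate_succ_apply, Tg_Gl, ih (sh a), ← Function.iterate_succ_apply]

lemma sh_iter_zero {α : Type*} (a : ℕ → α) (n : ℕ) : (sh^[n] a) 0 = a n := by
  induction n generalizing a with
  | zero => rfl
  | succ n ih =>
    rw [Function.iterate_succ_apply, ih (sh a)]
    rfl

lemma Fb_Gl (a : ℕ → PosN) : Fb (Gl a) = a := by
  funext n
  apply Subtype.ext
  show (⌊((Tg^[n] (Gl a)).1)⁻¹⌋).toNat = (a n : ℕ)
  rw [Tg_iter_Gl n a]
  show (⌊(Gv (sh^[n] a))⁻¹⌋).toNat = (a n : ℕ)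
  rw [Gv_floor]
  rw [show va (sh^[n] a) 0 = (a n : ℕ) by rw [va, sh_iter_zero]]
  exact Int.toNat_natCast _

lemma abs_sub_eq (θ θ' : I01) (h0 : Fb θ 0 = Fb θ' 0) :
    |θ.1 - θ'.1| = θ.1 * θ'.1 * |(Tg θ).1 - (Tg θ').1| := by
  have hx := inv_eq_Fb_add_Tg θ
  have hy := inv_eq_Fb_add_Tg θ'
  rw [h0] at hx
  have hθ : θ.1 ≠ 0 := θ.2.1.ne'
  have hθ' : θ'.1 ≠ 0 := θ'.2.1.ne'
  have key : θ.1 - θ'.1 = θ.1 * θ'.1 * ((Tg θ').1 - (Tg θ).1) := by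
    have e1 : θ.1 * (θ.1)⁻¹ = 1 := mul_inv_cancel₀ hθ
    have e2 : θ'.1 * (θ'.1)⁻¹ = 1 := mul_inv_cancel₀ hθ'
    rw [hx] at e1
    rw [hy] at e2
    linear_combination θ'.1 * e1 - θ.1 * e2
  rw [key, abs_mul, abs_sub_comm ((Tg θ).1)]
  rw [abs_of_pos (mul_pos θ.2.1 θ'.2.1)]

lemma mul_Tg_le_half (θ : I01) : θ.1 * (Tg θ).1 ≤ 1/2 := by
  have h := inv_eq_Fb_add_Tg θ
  have hc : (1:ℝ) ≤ ((Fb θ 0 : ℕ) : ℝ) := by exact_mod_cast (Fb θ 0).2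
  have ht0 : 0 < (Tg θ).1 := (Tg θ).2.1
  have ht1 : (Tg θ).1 < 1 := (Tg θ).2.2.1
  have hθ : θ.1 ≠ 0 := θ.2.1.ne'
  have e1 : θ.1 * (θ.1)⁻¹ = 1 := mul_inv_cancel₀ hθ
  rw [h] at e1
  nlinarith [θ.2.1]

lemma Fb_shift_eq {θ θ' : I01} (h : Fb θ = Fb θ') : Fb (Tg θ) = Fb (Tg θ') := by
  funext n
  rw [← Fb_succ, ← Fb_succ, h]

lemma inj_bound : ∀ (m : ℕ) (θ θ' : I01), Fb θ = Fb θ' → |θ.1 - θ'.1| ≤ (1/4:ℝ)^m := by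
  intro m
  induction m with
  | zero =>
    intro θ θ' _
    rw [pow_zero, abs_sub_le_iff]
    constructor <;> nlinarith [θ.2.1, θ.2.2.1, θ'.2.1, θ'.2.2.1]
  | succ m ih =>
    intro θ θ' h
    have h1 : Fb (Tg θ) = Fb (Tg θ') := Fb_shift_eq h
    have h2 : Fb (Tg (Tg θ)) = Fb (Tg (Tg θ')) := Fb_shift_eq h1
    have e1 : |θ.1 - θ'.1| = θ.1 * θ'.1 * |(Tg θ).1 - (Tg θ').1| :=
      abs_sub_eq θ θ' (congrFun h 0)
    have e2 : |(Tg θ).1 - (Tg θ').1|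
        = (Tg θ).1 * (Tg θ').1 * |(Tg (Tg θ)).1 - (Tg (Tg θ')).1| :=
      abs_sub_eq (Tg θ) (Tg θ') (congrFun h1 0)
    have hIH := ih (Tg (Tg θ)) (Tg (Tg θ')) h2
    have b1 : θ.1 * (Tg θ).1 ≤ 1/2 := mul_Tg_le_half θ
    have b2 : θ'.1 * (Tg θ').1 ≤ 1/2 := mul_Tg_le_half θ'
    have n1 : 0 < θ.1 * (Tg θ).1 := mul_pos θ.2.1 (Tg θ).2.1
    have n2 : 0 < θ'.1 * (Tg θ').1 := mul_pos θ'.2.1 (Tg θ').2.1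
    have habs : (0:ℝ) ≤ |(Tg (Tg θ)).1 - (Tg (Tg θ')).1| := abs_nonneg _
    calc |θ.1 - θ'.1|
        = (θ.1 * (Tg θ).1) * (θ'.1 * (Tg θ').1) * |(Tg (Tg θ)).1 - (Tg (Tg θ')).1| := by
          rw [e1, e2]; ring
      _ ≤ (1/2) * (1/2) * (1/4:ℝ)^m := by
          apply mul_le_mul _ hIH habs (by positivity)
          apply mul_le_mul b1 b2 n2.le (by norm_num)
      _ = (1/4:ℝ)^(m+1) := by rw [pow_succ]; ring

lemma Fb_injective : Function.Injective Fb := by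
  intro θ θ' h
  apply Subtype.ext
  have hm : ∀ m : ℕ, |θ.1 - θ'.1| ≤ (1/4:ℝ)^m := fun m => inj_bound m θ θ' h
  have hlim : Tendsto (fun m : ℕ => (1/4:ℝ)^m) atTop (𝓝 0) := by
    apply tendsto_pow_atTop_nhds_zero_of_lt_one <;> norm_num
  have h0 : |θ.1 - θ'.1| ≤ 0 := ge_of_tendsto hlim (Filter.Eventually.of_forall hm)
  have := abs_nonneg (θ.1 - θ'.1)
  have : |θ.1 - θ'.1| = 0 := le_antisymm h0 this
  rwa [abs_eq_zero, sub_eq_zero] at this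

lemma Gl_Fb (θ : I01) : Gl (Fb θ) = θ :=
  Fb_injective (by rw [Fb_Gl])

/-- The bijection. -/
noncomputable def cfEquiv : I01 ≃ (ℕ → PosN) where
  toFun := Fb
  invFun := Gl
  left_inv := Gl_Fb
  right_inv := Fb_Gl

end Bij

section Topology

open Filter Topology GenContFract

lemma theta_fract (θ : I01) : Int.fract θ.1 = θ.1 :=
  Int.fract_eq_self.mpr ⟨θ.2.1.le, θ.2.2.1⟩

lemma stream_theta : ∀ (n : ℕ) (θ : I01),
    IntFractPair.stream θ.1 (n+1) = some ⟨⌊((Tg^[n] θ).1)⁻¹⌋, (Tg^[n+1] θ).1⟩ := by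
  intro n
  induction n with
  | zero =>
    intro θ
    have hf : Int.fract θ.1 ≠ 0 := by rw [theta_fract]; exact θ.2.1.ne'
    rw [IntFractPair.stream_succ hf 0, theta_fract, IntFractPair.stream_zero]
    rfl
  | succ n ih =>
    intro θ
    have hf : Int.fract θ.1 ≠ 0 := by rw [theta_fract]; exact θ.2.1.ne'
    have hf2 : Int.fract ((θ.1)⁻¹) ≠ 0 := (fract_inv_pos θ).ne'
    have hf3 : Int.fract ((Tg θ).1) ≠ 0 := by
      rw [theta_fract]; exact (Tg θ).2.1.ne'
    have e1 : IntFractPair.stream θ.1 (n+2) = IntFractPair.stream (Tg θ).1 (n+1) := by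
      rw [IntFractPair.stream_succ hf (n+1), theta_fract,
        IntFractPair.stream_succ hf2 n, IntFractPair.stream_succ hf3 n, theta_fract]
      rfl
    rw [e1, ih (Tg θ), ← Function.iterate_succ_apply Tg n,
      ← Function.iterate_succ_apply Tg (n+1)]

lemma partDen_theta (θ : I01) (k : ℕ) :
    (GenContFract.of θ.1).partDens.get? k = some ((Fb θ k : ℕ) : ℝ) := by
  have h := get?_of_eq_some_of_succ_get?_intFractPair_stream (stream_theta k θ)
  show ((GenContFract.of θ.1).s.map Pair.b).get? k = _
  rw [Stream'.Seq.map_get?, h]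
  simp only [Option.map_some]
  rw [Fb_cast]

/-! ### Continuity of `Fb` -/

lemma fract_continuousAt {x : ℝ} (hx : Irrational x) : ContinuousAt Int.fract x := by
  have hlt : ((⌊x⌋ : ℝ)) < x := lt_of_le_of_ne (Int.floor_le x) (Ne.symm (hx.ne_int ⌊x⌋))
  have hmem : Set.Ioo ((⌊x⌋ : ℝ)) ((⌊x⌋ : ℝ) + 1) ∈ 𝓝 x :=
    Ioo_mem_nhds hlt (Int.lt_floor_add_one x)
  have hev : (fun y => y - (⌊x⌋ : ℝ)) =ᶠ[𝓝 x] Int.fract := by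
    filter_upwards [hmem] with y hy
    rw [Int.fract, Int.floor_eq_iff.mpr ⟨hy.1.le, hy.2⟩]
  exact ((continuous_id.sub continuous_const).continuousAt).congr hev

lemma inv_val_continuous : Continuous (fun θ : I01 => (θ.1)⁻¹) :=
  continuous_subtype_val.inv₀ (fun θ => θ.2.1.ne')

lemma Tg_continuous : Continuous Tg := by
  apply Continuous.subtype_mk
  rw [continuous_iff_continuousAt]
  intro θ
  have h1 : Filter.Tendsto (fun θ' : I01 => (θ'.1)⁻¹) (𝓝 θ) (𝓝 ((θ.1)⁻¹)) :=
    inv_val_continuous.continuousAt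
  have h2 : Filter.Tendsto Int.fract (𝓝 ((θ.1)⁻¹)) (𝓝 (Int.fract ((θ.1)⁻¹))) :=
    fract_continuousAt (θ.2.2.2.inv)
  exact h2.comp h1

lemma Fb_iter (θ : I01) (n : ℕ) : Fb θ n = Fb (Tg^[n] θ) 0 := by
  induction n generalizing θ with
  | zero => rfl
  | succ n ih => rw [Fb_succ, ih (Tg θ), ← Function.iterate_succ_apply]

lemma Fb0_eventually (θ : I01) : ∀ᶠ θ' in 𝓝 θ, Fb θ' 0 = Fb θ 0 := by
  set m : ℤ := ⌊(θ.1)⁻¹⌋ with hm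
  have hlt : ((m : ℝ)) < (θ.1)⁻¹ :=
    lt_of_le_of_ne (Int.floor_le _) (Ne.symm ((θ.2.2.2.inv).ne_int m))
  have hmem : Set.Ioo ((m:ℝ)) ((m:ℝ)+1) ∈ 𝓝 ((θ.1)⁻¹) :=
    Ioo_mem_nhds hlt (Int.lt_floor_add_one _)
  have hev := (inv_val_continuous.continuousAt (x := θ)).eventually_mem hmem
  filter_upwards [hev] with θ' hθ'
  apply Subtype.ext
  show (⌊((Tg^[0] θ').1)⁻¹⌋).toNat = (⌊((Tg^[0] θ).1)⁻¹⌋).toNat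
  rw [Function.iterate_zero_apply, Function.iterate_zero_apply, ← hm,
    Int.floor_eq_iff.mpr ⟨hθ'.1.le, hθ'.2⟩]

lemma Fb_continuous : Continuous Fb := by
  apply continuous_pi
  intro n
  rw [continuous_iff_continuousAt]
  intro θ
  rw [ContinuousAt, nhds_discrete PosN, Filter.tendsto_pure]
  have hTn : ContinuousAt (Tg^[n]) θ := (Tg_continuous.iterate n).continuousAt
  filter_upwards [Filter.Tendsto.eventually hTn (Fb0_eventually (Tg^[n] θ))] with θ' h1
  rw [Fb_iter θ' n, Fb_iter θ n]
  exact h1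

/-! ### Continuity of `Gl` -/

lemma pqAux_congr {a b : ℕ → ℕ} : ∀ n, (∀ k ≤ n, a k = b k) → pqAux a n = pqAux b n := by
  intro n
  induction n with
  | zero => intro h; simp [pqAux, h 0 (le_refl 0)]
  | succ n ih =>
    intro h
    rw [pqAux, pqAux, ih (fun k hk => h k (hk.trans (Nat.le_succ n))), h (n+1) (le_refl _)]

lemma cN_congr {a b : ℕ → ℕ} (n : ℕ) (h : ∀ k ≤ n, a k = b k) : cN a n = cN b n := by
  unfold cN pN qN
  rw [pqAux_congr n h]

lemma Gv_continuous : Continuous Gv := by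
  rw [continuous_iff_continuousAt]
  intro a
  rw [ContinuousAt, Metric.tendsto_nhds]
  intro ε hε
  obtain ⟨n, hn⟩ := exists_pow_lt_of_lt_one (x := ε/4) (y := (1/2:ℝ)) (by linarith) (by norm_num)
  have hkey : ∀ k : ℕ, ∀ᶠ a' in 𝓝 a, a' k = a k := by
    intro k
    have : ContinuousAt (fun a' : ℕ → PosN => a' k) a := (continuous_apply k).continuousAt
    rw [ContinuousAt, nhds_discrete PosN, Filter.tendsto_pure] at this
    exact this
  have hev : ∀ᶠ a' in 𝓝 a, ∀ k ∈ Finset.range (n+1), a' k = a k :=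
    (Filter.eventually_all_finset _).mpr (fun k _ => hkey k)
  filter_upwards [hev] with a' ha'
  have hcN : cN (va a') n = cN (va a) n := by
    apply cN_congr
    intro k hk
    unfold va
    rw [ha' k (Finset.mem_range.mpr (Nat.lt_succ_of_le hk))]
  have d1 := Gv_dist a' n
  have d2 := Gv_dist a n
  rw [Real.dist_eq]
  have : |Gv a' - Gv a| ≤ 4 * (1/2:ℝ)^n := by
    calc |Gv a' - Gv a|
        ≤ |Gv a' - cN (va a') n| + |cN (va a') n - Gv a| := abs_sub_le _ _ _
      _ = |Gv a' - cN (va a') n| + |cN (va a) n - Gv a| := by rw [hcN]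
      _ ≤ 2*(1/2:ℝ)^n + 2*(1/2:ℝ)^n := by
          rw [abs_sub_comm (cN (va a) n)]
          exact add_le_add d1 d2
      _ = 4 * (1/2:ℝ)^n := by ring
  linarith

lemma Gl_continuous : Continuous Gl :=
  Gv_continuous.subtype_mk _

/-- The homeomorphism. -/
noncomputable def cfHomeo : I01 ≃ₜ (ℕ → PosN) :=
  { cfEquiv with
    continuous_toFun := Fb_continuous
    continuous_invFun := Gl_continuous }

lemma cfHomeo_apply (θ : I01) : cfHomeo θ = Fb θ := rfl

end Topology

end CFBaire


/-- The map sending an irrational `θ ∈ (0,1)` to its sequence of continued fraction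
partial denominators `(r_1(θ), r_2(θ), …)` is a homeomorphism onto the Baire space of
positive integer sequences (with the product topology). -/
theorem contFract_partDens_homeomorph_baireSpace :
    ∃ h : {θ : ℝ // 0 < θ ∧ θ < 1 ∧ Irrational θ} ≃ₜ (ℕ → {m : ℕ // 1 ≤ m}),
      ∀ (θ : {θ : ℝ // 0 < θ ∧ θ < 1 ∧ Irrational θ}) (k : ℕ),
        ((h θ k : ℕ) : ℝ) = cfPartDen θ.1 (k + 1) := by
  refine ⟨CFBaire.cfHomeo, fun θ k => ?_⟩
  show ((CFBaire.Fb θ k : ℕ) : ℝ) = _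
  unfold cfPartDen
  rw [show k + 1 - 1 = k from rfl, CFBaire.partDen_theta θ k]
  rfl
end
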